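/- arXiv:1211.0507 — 11 statements merged into one kernel-verified Lean document; each statement's English description precedes it below -/
import Mathlib

section
/- Let μ̂ be a bicapacity on J. Then Ch^B(x,μ̂) = −Ch^B(−x,μ̂) for all x ∈ [−1,1]^n if and only if μ̂(C,D) = −μ̂(D,C) for every (C,D) ∈ P(J). -/
/-- The bipolar Choquet integral of `x` with respect to `μ`:
`∫₀¹ μ({j : x j > t}, {j : x j < -t}) dt`. The same formula is used for
`Ch^B`, `Ch^{B+}` and `Ch^{B-}` (with `μ̂`, `μ⁺`, `μ⁻` respectively). -/
noncomputable def ChB {n : ℕ} (μ : Finset (Fin n) → Finset (Fin n) → ℝ)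
    (x : Fin n → ℝ) : ℝ :=
  ∫ t in (0:ℝ)..1,
    μ (Finset.univ.filter (fun j => t < x j)) (Finset.univ.filter (fun j => x j < -t))

theorem stmt_4 {n : ℕ} (hn : 1 ≤ n)
    (hatμ : Finset (Fin n) → Finset (Fin n) → ℝ)
    (hrange : ∀ C D : Finset (Fin n), Disjoint C D → hatμ C D ∈ Set.Icc (-1:ℝ) 1)
    (hb1 : hatμ ∅ Finset.univ = -1) (hb2 : hatμ Finset.univ ∅ = 1)
    (hb3 : hatμ ∅ ∅ = 0)
    (hmono : ∀ C D E F : Finset (Fin n), Disjoint C D → Disjoint E F →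
        C ⊆ E → F ⊆ D → hatμ C D ≤ hatμ E F) :
    (∀ x : Fin n → ℝ, (∀ j, x j ∈ Set.Icc (-1:ℝ) 1) →
        ChB hatμ x = -ChB hatμ (-x)) ↔
    (∀ C D : Finset (Fin n), Disjoint C D → hatμ C D = -hatμ D C) := by
  constructor
  · intro h C D hCD
    set x : Fin n → ℝ := fun j => if j ∈ C then 1 else if j ∈ D then -1 else 0 with hx
    have hxmem : ∀ j, x j ∈ Set.Icc (-1:ℝ) 1 := by
      intro j; simp only [hx, Set.mem_Icc]; split_ifs <;> norm_num
    have hCD' : ∀ j, j ∈ C → j ∉ D := fun j hj => Finset.disjoint_left.mp hCD hj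
    have hne : ∀ᵐ t : ℝ, t ≠ (1:ℝ) := by
      have h0 : MeasureTheory.volume ({(1:ℝ)} : Set ℝ) = 0 :=
        MeasureTheory.measure_singleton 1
      filter_upwards [MeasureTheory.measure_eq_zero_iff_ae_notMem.mp h0] with t ht
      simpa using ht
    have h1 : ChB hatμ x = hatμ C D := by
      unfold ChB
      rw [intervalIntegral.integral_congr_ae
        (g := fun _ : ℝ => hatμ C D) ?_]
      · simp
      · filter_upwards [hne] with t ht htmem
        rw [Set.uIoc_of_le zero_le_one] at htmem
        obtain ⟨ht0, ht1⟩ := htmem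
        have ht1' : t < 1 := lt_of_le_of_ne ht1 ht
        have e1 : Finset.univ.filter (fun j => t < x j) = C := by
          ext j
          simp only [Finset.mem_filter, Finset.mem_univ, true_and, hx]
          split_ifs with h1 h2
          · exact iff_of_true ht1' h1
          · constructor
            · intro hlt; linarith
            · intro hj; exact absurd hj h1
          · constructor
            · intro hlt; linarith
            · intro hj; exact absurd hj h1
        have e2 : Finset.univ.filter (fun j => x j < -t) = D := by
          ext j
          simp only [Finset.mem_filter, Finset.mem_univ, true_and, hx]
          split_ifs with h1 h2
          · constructor
            · intro hlt; linarith
            · intro hj; exact absurd hj (hCD' j h1)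
          · constructor
            · intro _; exact h2
            · intro _; linarith
          · constructor
            · intro hlt; linarith
            · intro hj; exact absurd hj h2
        rw [e1, e2]
    have h2 : ChB hatμ (-x) = hatμ D C := by
      unfold ChB
      rw [intervalIntegral.integral_congr_ae
        (g := fun _ : ℝ => hatμ D C) ?_]
      · simp
      · filter_upwards [hne] with t ht htmem
        rw [Set.uIoc_of_le zero_le_one] at htmem
        obtain ⟨ht0, ht1⟩ := htmem
        have ht1' : t < 1 := lt_of_le_of_ne ht1 ht
        have e1 : Finset.univ.filter (fun j => t < (-x) j) = D := by
          ext j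
          simp only [Finset.mem_filter, Finset.mem_univ, true_and, hx, Pi.neg_apply]
          split_ifs with h1 h2
          · constructor
            · intro hlt; linarith
            · intro hj; exact absurd hj (hCD' j h1)
          · constructor
            · intro _; exact h2
            · intro _; simpa using ht1'
          · constructor
            · intro hlt; simp at hlt; linarith
            · intro hj; exact absurd hj h2
        have e2 : Finset.univ.filter (fun j => (-x) j < -t) = C := by
          ext j
          simp only [Finset.mem_filter, Finset.mem_univ, true_and, hx, Pi.neg_apply]
          split_ifs with h1 h2
          · constructor
            · intro _; exact h1
            · intro _; linarith
          · constructor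
            · intro hlt; linarith
            · intro hj; exact absurd hj h1
          · constructor
            · intro hlt; linarith
            · intro hj; exact absurd hj h1
        rw [e1, e2]
    have := h x hxmem
    rw [h1, h2] at this
    exact this
  · intro h x _
    have key : ∀ t ∈ Set.uIcc (0:ℝ) 1,
        hatμ (Finset.univ.filter (fun j => t < (-x) j))
          (Finset.univ.filter (fun j => (-x) j < -t))
        = -(hatμ (Finset.univ.filter (fun j => t < x j))
            (Finset.univ.filter (fun j => x j < -t))) := by
      intro t htmem
      rw [Set.uIcc_of_le zero_le_one] at htmem
      obtain ⟨ht0, _⟩ := htmem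
      have e1 : Finset.univ.filter (fun j => t < (-x) j)
          = Finset.univ.filter (fun j => x j < -t) := by
        ext j; simp only [Finset.mem_filter, Finset.mem_univ, true_and, Pi.neg_apply]
        constructor <;> intro hj <;> linarith
      have e2 : Finset.univ.filter (fun j => (-x) j < -t)
          = Finset.univ.filter (fun j => t < x j) := by
        ext j; simp only [Finset.mem_filter, Finset.mem_univ, true_and, Pi.neg_apply]
        constructor <;> intro hj <;> linarith
      rw [e1, e2]
      have hdisj : Disjoint (Finset.univ.filter (fun j => x j < -t))
          (Finset.univ.filter (fun j => t < x j)) := by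
        rw [Finset.disjoint_left]
        intro j hj hj'
        simp only [Finset.mem_filter, Finset.mem_univ, true_and] at hj hj'
        linarith
      exact h _ _ hdisj
    unfold ChB
    rw [show (∫ t in (0:ℝ)..1,
        hatμ (Finset.univ.filter (fun j => t < (-x) j))
          (Finset.univ.filter (fun j => (-x) j < -t)))
      = ∫ t in (0:ℝ)..1,
        -(hatμ (Finset.univ.filter (fun j => t < x j))
            (Finset.univ.filter (fun j => x j < -t)))
      from intervalIntegral.integral_congr key]
    rw [intervalIntegral.integral_neg]
    ring
end

section
/- Let μ⁺, μ⁻ : P(J) → [0,1] satisfy the boundary and monotonicity conditions. Then Ch^{B+}(x,μ⁺) = Ch^{B−}(−x,μ⁻) for all x ∈ [−1,1]^n if and only if μ⁺(C,D) = μ⁻(D,C) for every (C,D) ∈ P(J). -/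
open MeasureTheory in
lemma helper_integral (g : ℝ → ℝ) (c : ℝ)
    (h : ∀ t ∈ Set.Ioo (0:ℝ) 1, g t = c) :
    ∫ t in (0:ℝ)..1, g t = c := by
  have h1 : ∫ t in (0:ℝ)..1, g t = ∫ _t in (0:ℝ)..1, c := by
    apply intervalIntegral.integral_congr_ae
    filter_upwards [compl_mem_ae_iff.mpr (measure_singleton (1:ℝ))] with t ht hmem
    rw [Set.uIoc_of_le (by norm_num : (0:ℝ) ≤ 1)] at hmem
    exact h t ⟨hmem.1, lt_of_le_of_ne hmem.2 (by simpa using ht)⟩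
  simp [h1]

theorem stmt_5 {n : ℕ} (hn : 1 ≤ n)
    (μp μm : Finset (Fin n) → Finset (Fin n) → ℝ)
    (hprange : ∀ C D : Finset (Fin n), Disjoint C D → μp C D ∈ Set.Icc (0:ℝ) 1)
    (hmrange : ∀ C D : Finset (Fin n), Disjoint C D → μm C D ∈ Set.Icc (0:ℝ) 1)
    (hpb1 : μp Finset.univ ∅ = 1) (hpb2 : ∀ B : Finset (Fin n), μp ∅ B = 0)
    (hmb1 : μm ∅ Finset.univ = 1) (hmb2 : ∀ B : Finset (Fin n), μm B ∅ = 0)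
    (hpmono : ∀ C D E F : Finset (Fin n), Disjoint C D → Disjoint E F →
        C ⊆ E → F ⊆ D → μp C D ≤ μp E F)
    (hmmono : ∀ C D E F : Finset (Fin n), Disjoint C D → Disjoint E F →
        E ⊆ C → D ⊆ F → μm C D ≤ μm E F) :
    (∀ x : Fin n → ℝ, (∀ j, x j ∈ Set.Icc (-1:ℝ) 1) →
        ChB μp x = ChB μm (-x)) ↔
    (∀ C D : Finset (Fin n), Disjoint C D → μp C D = μm D C) := by
  constructor
  · intro h C D hCD
    set x : Fin n → ℝ := fun j => if j ∈ C then 1 else if j ∈ D then -1 else 0 with hxdef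
    have hx1 : ∀ j, x j ∈ Set.Icc (-1:ℝ) 1 := by
      intro j; simp only [hxdef]; split_ifs <;> norm_num
    have hkey := h x hx1
    have hCfil : ∀ t ∈ Set.Ioo (0:ℝ) 1,
        Finset.univ.filter (fun j => t < x j) = C := by
      intro t ht
      ext j
      simp only [Finset.mem_filter, Finset.mem_univ, true_and, hxdef]
      by_cases hC : j ∈ C
      · simp [hC, ht.2]
      · simp only [hC, if_false, iff_false]
        by_cases hD : j ∈ D <;> simp [hD] <;> linarith [ht.1]
    have hDfil : ∀ t ∈ Set.Ioo (0:ℝ) 1,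
        Finset.univ.filter (fun j => x j < -t) = D := by
      intro t ht
      ext j
      simp only [Finset.mem_filter, Finset.mem_univ, true_and, hxdef]
      by_cases hC : j ∈ C
      · have : j ∉ D := Finset.disjoint_left.mp hCD hC
        simp [hC, this]; linarith [ht.1]
      · by_cases hD : j ∈ D
        · simp [hC, hD]; linarith [ht.2]
        · simp [hC, hD]; linarith [ht.1]
    have hleft : ChB μp x = μp C D := by
      unfold ChB
      apply helper_integral
      intro t ht
      rw [hCfil t ht, hDfil t ht]
    have hright : ChB μm (-x) = μm D C := by
      unfold ChB
      apply helper_integral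
      intro t ht
      have hA : Finset.univ.filter (fun j => t < (-x) j)
          = Finset.univ.filter (fun j => x j < -t) := by
        ext j; simp [lt_neg]
      have hB : Finset.univ.filter (fun j => (-x) j < -t)
          = Finset.univ.filter (fun j => t < x j) := by
        ext j; simp [neg_lt_neg_iff]
      rw [hA, hB, hCfil t ht, hDfil t ht]
    rw [hleft, hright] at hkey
    exact hkey
  · intro h x hx
    unfold ChB
    apply intervalIntegral.integral_congr
    intro t ht
    rw [Set.uIcc_of_le (by norm_num : (0:ℝ) ≤ 1)] at ht
    have hd : Disjoint (Finset.univ.filter (fun j => t < x j))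
        (Finset.univ.filter (fun j => x j < -t)) := by
      rw [Finset.disjoint_left]
      intro j hj1 hj2
      simp only [Finset.mem_filter, Finset.mem_univ, true_and] at hj1 hj2
      linarith [ht.1]
    have hA : Finset.univ.filter (fun j => t < (-x) j)
        = Finset.univ.filter (fun j => x j < -t) := by
      ext j; simp [lt_neg]
    have hB : Finset.univ.filter (fun j => (-x) j < -t)
        = Finset.univ.filter (fun j => t < x j) := by
      ext j; simp [neg_lt_neg_iff]
    show μp _ _ = μm (Finset.univ.filter (fun j => t < (-x) j))
        (Finset.univ.filter (fun j => (-x) j < -t))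
    rw [hA, hB, h _ _ hd]
end

section
/- Let μ⁺, μ⁻ : P(J) → [0,1] satisfy the boundary and monotonicity conditions and let μ̂(C,D) = μ⁺(C,D) − μ⁻(C,D) for all (C,D) ∈ P(J). If μ⁺(C,D) = μ⁻(D,C) for every (C,D) ∈ P(J), then Ch^B(x,μ̂) = −Ch^B(−x,μ̂) for all x ∈ [−1,1]^n. -/
theorem stmt_6 {n : ℕ} (hn : 1 ≤ n)
    (μp μm : Finset (Fin n) → Finset (Fin n) → ℝ)
    (hprange : ∀ C D : Finset (Fin n), Disjoint C D → μp C D ∈ Set.Icc (0:ℝ) 1)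
    (hmrange : ∀ C D : Finset (Fin n), Disjoint C D → μm C D ∈ Set.Icc (0:ℝ) 1)
    (hpb1 : μp Finset.univ ∅ = 1) (hpb2 : ∀ B : Finset (Fin n), μp ∅ B = 0)
    (hmb1 : μm ∅ Finset.univ = 1) (hmb2 : ∀ B : Finset (Fin n), μm B ∅ = 0)
    (hpmono : ∀ C D E F : Finset (Fin n), Disjoint C D → Disjoint E F →
        C ⊆ E → F ⊆ D → μp C D ≤ μp E F)
    (hmmono : ∀ C D E F : Finset (Fin n), Disjoint C D → Disjoint E F →
        E ⊆ C → D ⊆ F → μm C D ≤ μm E F)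
    (hatμ : Finset (Fin n) → Finset (Fin n) → ℝ)
    (hdef : ∀ C D : Finset (Fin n), Disjoint C D → hatμ C D = μp C D - μm C D)
    (hsym : ∀ C D : Finset (Fin n), Disjoint C D → μp C D = μm D C) :
    ∀ x : Fin n → ℝ, (∀ j, x j ∈ Set.Icc (-1:ℝ) 1) →
      ChB hatμ x = -ChB hatμ (-x) := by
  intro x hx
  have key : ∀ C D : Finset (Fin n), Disjoint C D → hatμ C D = -hatμ D C := by
    intro C D h
    rw [hdef C D h, hdef D C h.symm, hsym C D h, hsym D C h.symm]
    ring
  have : ChB hatμ (-x) = -ChB hatμ x := by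
    unfold ChB
    rw [← intervalIntegral.integral_neg]
    apply intervalIntegral.integral_congr
    intro t ht
    rw [Set.uIcc_of_le (by norm_num : (0:ℝ) ≤ 1)] at ht
    have ht0 : (0:ℝ) ≤ t := ht.1
    have hA : (Finset.univ.filter (fun j => t < (-x) j)) =
        (Finset.univ.filter (fun j => x j < -t)) := by
      apply Finset.filter_congr
      intro j _
      simp only [Pi.neg_apply]
      constructor <;> intro h <;> linarith
    have hB : (Finset.univ.filter (fun j => (-x) j < -t)) =
        (Finset.univ.filter (fun j => t < x j)) := by
      apply Finset.filter_congr
      intro j _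
      simp only [Pi.neg_apply]
      constructor <;> intro h <;> linarith
    have hdisj : Disjoint (Finset.univ.filter (fun j => x j < -t))
        (Finset.univ.filter (fun j => t < x j)) := by
      rw [Finset.disjoint_left]
      intro j hj hj'
      simp only [Finset.mem_filter] at hj hj'
      linarith [hj.2, hj'.2]
    simp only [hA, hB]
    rw [key _ _ hdisj]
  linarith [this]
end

section
/- Let μ⁺ be given by a 2-additive decomposition with coefficients a_j⁺, a_{jk}⁺, a⁺_{j|k}. Then for every x ∈ [−1,1]^n, Ch^{B+}(x,μ⁺) = Σ_{j ∈ J, x_j > 0} a_j⁺·x_j + Σ_{{j,k} ⊆ J, j ≠ k, x_j > 0, x_k > 0} a_{jk}⁺·min(x_j, x_k) + Σ_{j,k ∈ J, j ≠ k, x_j > 0, x_k < 0} a⁺_{j|k}·min(x_j, −x_k), where the second sum is over unordered pairs {j,k} and the third over ordered pairs (j,k). -/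
/-- Sum of a symmetric coefficient family over the unordered pairs `{j,k} ⊆ C`, `j ≠ k`. -/
noncomputable def pairSum {n : ℕ} (a : Fin n → Fin n → ℝ) (C : Finset (Fin n)) : ℝ :=
  (∑ p ∈ C.offDiag, a p.1 p.2) / 2

/-- `μ⁺(C,D) = Σ_{j∈C} a_j⁺ + Σ_{{j,k}⊆C} a_{jk}⁺ + Σ_{j∈C,k∈D} a⁺_{j|k}`. -/
noncomputable def muPlus {n : ℕ} (ap : Fin n → ℝ) (aps apo : Fin n → Fin n → ℝ)
    (C D : Finset (Fin n)) : ℝ :=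
  ∑ j ∈ C, ap j + pairSum aps C + ∑ j ∈ C, ∑ k ∈ D, apo j k

/-- `μ⁻(C,D) = Σ_{j∈D} a_j⁻ + Σ_{{j,k}⊆D} a_{jk}⁻ + Σ_{j∈C,k∈D} a⁻_{j|k}`. -/
noncomputable def muMinus {n : ℕ} (am : Fin n → ℝ) (ams amo : Fin n → Fin n → ℝ)
    (C D : Finset (Fin n)) : ℝ :=
  ∑ j ∈ D, am j + pairSum ams D + ∑ j ∈ C, ∑ k ∈ D, amo j k

lemma indEq (a c : ℝ) : (fun t => if t < c then a else 0) = Set.indicator (Set.Iio c) (fun _ => a) := by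
  funext t; simp [Set.indicator_apply, Set.mem_Iio]

lemma intg (a c : ℝ) : IntervalIntegrable (fun t => if t < c then a else 0) MeasureTheory.volume 0 1 := by
  rw [indEq, intervalIntegrable_iff]
  exact (MeasureTheory.integrableOn_const measure_Ioc_lt_top.ne).indicator measurableSet_Iio

lemma key (a c : ℝ) (hc : c ≤ 1) :
    ∫ t in (0:ℝ)..1, (if t < c then a else 0) = a * max c 0 := by
  rw [indEq, intervalIntegral.integral_of_le zero_le_one,
    MeasureTheory.setIntegral_indicator measurableSet_Iio]
  rcases le_or_gt c 0 with h | h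
  · have : Set.Ioc (0:ℝ) 1 ∩ Set.Iio c = ∅ := by
      ext t; simp only [Set.mem_inter_iff, Set.mem_Ioc, Set.mem_Iio, Set.mem_empty_iff_false,
        iff_false]
      rintro ⟨⟨h1, _⟩, h2⟩; linarith
    rw [this]; simp [max_eq_right h]
  · have : Set.Ioc (0:ℝ) 1 ∩ Set.Iio c = Set.Ioo 0 c := by
      ext t; simp only [Set.mem_inter_iff, Set.mem_Ioc, Set.mem_Iio, Set.mem_Ioo]
      constructor
      · rintro ⟨⟨h1, _⟩, h2⟩; exact ⟨h1, h2⟩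
      · rintro ⟨h1, h2⟩; exact ⟨⟨h1, le_trans h2.le hc⟩, h2⟩
    rw [this, MeasureTheory.setIntegral_const, Real.volume_real_Ioo]
    rw [max_eq_left h.le]
    simp [ENNReal.toReal_ofReal h.le, mul_comm, h.le]

lemma maxIf (a c : ℝ) : a * max c 0 = if 0 < c then a * c else 0 := by
  rcases le_or_gt c 0 with h | h
  · simp [max_eq_right h, h.not_gt]
  · simp [max_eq_left h.le, h]

lemma offDiagFilter {n : ℕ} (s : Fin n → Prop) [DecidablePred s] :
    (Finset.univ.filter s).offDiag
      = Finset.univ.offDiag.filter (fun p : Fin n × Fin n => s p.1 ∧ s p.2) := by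
  ext ⟨a, b⟩
  simp only [Finset.mem_offDiag, Finset.mem_filter, Finset.mem_univ, true_and]
  tauto


lemma intgSum {ι : Type*} (s : Finset ι) (f : ι → ℝ → ℝ)
    (h : ∀ i ∈ s, IntervalIntegrable (f i) MeasureTheory.volume 0 1) :
    IntervalIntegrable (fun t => ∑ i ∈ s, f i t) MeasureTheory.volume 0 1 := by
  have := IntervalIntegrable.sum s h
  have e : (∑ i ∈ s, f i) = fun t => ∑ i ∈ s, f i t := by
    funext t; simp [Finset.sum_apply]
  rwa [e] at this

set_option maxHeartbeats 1000000 in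
theorem stmt_7' {n : ℕ} (hn : 1 ≤ n)
    (ap : Fin n → ℝ) (aps apo : Fin n → Fin n → ℝ)
    (hap : ∀ j, 0 ≤ ap j)
    (hsym : ∀ j k, aps j k = aps k j)
    (hapo : ∀ j k, j ≠ k → apo j k ≤ 0)
    (x : Fin n → ℝ) (hx : ∀ j, x j ∈ Set.Icc (-1:ℝ) 1) :
    (∫ t in (0:ℝ)..1,
      (∑ j : Fin n, (if t < x j then ap j else 0)
        + (∑ p ∈ Finset.univ.offDiag, (if t < min (x p.1) (x p.2) then aps p.1 p.2 else 0)) / 2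
        + ∑ j : Fin n, ∑ k : Fin n, (if t < min (x j) (-(x k)) then apo j k else 0))) =
      ∑ j ∈ Finset.univ.filter (fun j => 0 < x j), ap j * x j
      + (∑ p ∈ (Finset.univ.filter (fun j => 0 < x j)).offDiag,
          aps p.1 p.2 * min (x p.1) (x p.2)) / 2
      + ∑ j ∈ Finset.univ.filter (fun j => 0 < x j),
          ∑ k ∈ Finset.univ.filter (fun k => x k < 0),
            apo j k * min (x j) (-x k) := by
  have hx1 : ∀ j, x j ≤ 1 := fun j => (hx j).2
  have i1 : IntervalIntegrable (fun t => ∑ j : Fin n, (if t < x j then ap j else 0))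
      MeasureTheory.volume 0 1 :=
    intgSum _ _ (fun j _ => intg _ _)
  have i2 : IntervalIntegrable (fun t =>
      (∑ p ∈ Finset.univ.offDiag, (if t < min (x p.1) (x p.2) then aps p.1 p.2 else 0)) / 2)
      MeasureTheory.volume 0 1 :=
    (intgSum _ _ (fun p _ => intg _ _)).div_const 2
  have i3 : IntervalIntegrable (fun t =>
      ∑ j : Fin n, ∑ k : Fin n, (if t < min (x j) (-(x k)) then apo j k else 0))
      MeasureTheory.volume 0 1 :=
    intgSum _ _ (fun j _ => intgSum _ _ (fun k _ => intg _ _))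
  rw [intervalIntegral.integral_add (i1.add i2) i3, intervalIntegral.integral_add i1 i2]
  congr 1
  · congr 1
    · rw [intervalIntegral.integral_finset_sum (fun j _ => intg _ _)]
      rw [Finset.sum_filter]
      apply Finset.sum_congr rfl
      intro j _
      rw [key _ _ (hx1 j), maxIf]
    · rw [intervalIntegral.integral_div,
        intervalIntegral.integral_finset_sum (fun p _ => intg _ _)]
      congr 1
      rw [offDiagFilter, Finset.sum_filter]
      apply Finset.sum_congr rfl
      intro p _
      rw [key _ _ (le_trans (min_le_left _ _) (hx1 p.1)), maxIf]
      exact if_congr lt_min_iff rfl rfl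
  · rw [intervalIntegral.integral_finset_sum
      (fun j _ => intgSum _ _ (fun k _ => intg _ _))]
    rw [Finset.sum_filter]
    apply Finset.sum_congr rfl
    intro j _
    rw [intervalIntegral.integral_finset_sum (fun k _ => intg _ _)]
    by_cases h : 0 < x j
    · rw [if_pos h, Finset.sum_filter]
      apply Finset.sum_congr rfl
      intro k _
      rw [key _ _ (le_trans (min_le_left _ _) (hx1 j)), maxIf]
      simp [lt_min_iff, h, neg_pos]
    · rw [if_neg h]
      apply Finset.sum_eq_zero
      intro k _
      rw [key _ _ (le_trans (min_le_left _ _) (hx1 j)), maxIf, if_neg]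
      rw [lt_min_iff]
      tauto

set_option maxHeartbeats 1000000 in
theorem stmt_7 {n : ℕ} (hn : 1 ≤ n)
    (ap : Fin n → ℝ) (aps apo : Fin n → Fin n → ℝ)
    (hap : ∀ j, 0 ≤ ap j)
    (hsym : ∀ j k, aps j k = aps k j)
    (hapo : ∀ j k, j ≠ k → apo j k ≤ 0)
    (x : Fin n → ℝ) (hx : ∀ j, x j ∈ Set.Icc (-1:ℝ) 1) :
    ChB (muPlus ap aps apo) x =
      ∑ j ∈ Finset.univ.filter (fun j => 0 < x j), ap j * x j
      + (∑ p ∈ (Finset.univ.filter (fun j => 0 < x j)).offDiag,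
          aps p.1 p.2 * min (x p.1) (x p.2)) / 2
      + ∑ j ∈ Finset.univ.filter (fun j => 0 < x j),
          ∑ k ∈ Finset.univ.filter (fun k => x k < 0),
            apo j k * min (x j) (-x k) := by
  have hint : ∀ t : ℝ,
      muPlus ap aps apo (Finset.univ.filter (fun j => t < x j))
        (Finset.univ.filter (fun j => x j < -t))
      = ∑ j : Fin n, (if t < x j then ap j else 0)
        + (∑ p ∈ Finset.univ.offDiag, (if t < min (x p.1) (x p.2) then aps p.1 p.2 else 0)) / 2
        + ∑ j : Fin n, ∑ k : Fin n, (if t < min (x j) (-(x k)) then apo j k else 0) := by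
    intro t
    unfold muPlus pairSum
    congr 1
    · congr 1
      · rw [Finset.sum_filter]
      · rw [offDiagFilter, Finset.sum_filter]
        congr 1
        apply Finset.sum_congr rfl
        intro p _
        exact if_congr lt_min_iff.symm rfl rfl
    · rw [Finset.sum_filter]
      apply Finset.sum_congr rfl
      intro j _
      rw [Finset.sum_filter]
      by_cases h : t < x j
      · rw [if_pos h]
        apply Finset.sum_congr rfl
        intro k _
        refine if_congr ?_ rfl rfl
        rw [lt_min_iff]
        constructor
        · intro hk; exact ⟨h, by linarith⟩
        · intro hk; linarith [hk.2]
      · rw [if_neg h]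
        symm
        apply Finset.sum_eq_zero
        intro k _
        rw [if_neg]
        rw [lt_min_iff]
        tauto
  unfold ChB
  rw [intervalIntegral.integral_congr (g := fun t =>
      ∑ j : Fin n, (if t < x j then ap j else 0)
        + (∑ p ∈ Finset.univ.offDiag, (if t < min (x p.1) (x p.2) then aps p.1 p.2 else 0)) / 2
        + ∑ j : Fin n, ∑ k : Fin n, (if t < min (x j) (-(x k)) then apo j k else 0))
      (fun t _ => hint t)]
  exact stmt_7' hn ap aps apo hap hsym hapo x hx
end

section
/- Let μ⁻ be given by a 2-additive decomposition with coefficients a_j⁻, a_{jk}⁻, a⁻_{j|k}. Then for every x ∈ [−1,1]^n, Ch^{B−}(x,μ⁻) = −Σ_{j ∈ J, x_j < 0} a_j⁻·x_j − Σ_{{j,k} ⊆ J, j ≠ k, x_j < 0, x_k < 0} a_{jk}⁻·max(x_j, x_k) − Σ_{j,k ∈ J, j ≠ k, x_j > 0, x_k < 0} a⁻_{j|k}·max(−x_j, x_k), where the second sum is over unordered pairs {j,k} and the third over ordered pairs (j,k). -/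
open MeasureTheory


lemma step_intble (c r : ℝ) :
    IntervalIntegrable (fun t => if t < c then r else 0) volume 0 1 := by
  have h : (fun t : ℝ => if t < c then r else 0)
      = Set.indicator (Set.Iio c) (fun _ => r) := by
    ext t; simp [Set.indicator_apply]
  rw [h]
  constructor <;>
    exact ((integrableOn_const_iff (C := r)).mpr (Or.inr measure_Ioc_lt_top)).indicator measurableSet_Iio

lemma step_int (c r : ℝ) (hc : c ≤ 1) :
    ∫ t in (0:ℝ)..1, (if t < c then r else 0) = r * max c 0 := by
  have h : ∀ t : ℝ, (if t < c then r else 0) = Set.indicator (Set.Iio c) (fun _ => r) t := by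
    intro t; simp [Set.indicator_apply]
  rw [intervalIntegral.integral_of_le zero_le_one]
  simp_rw [h]
  rw [setIntegral_indicator measurableSet_Iio, setIntegral_const]
  have hset : Set.Ioc (0:ℝ) 1 ∩ Set.Iio c = Set.Ioo 0 (max c 0) := by
    rcases le_or_gt c 0 with h0 | h0
    · ext t
      simp only [Set.mem_inter_iff, Set.mem_Ioc, Set.mem_Iio, Set.mem_Ioo,
        max_eq_right h0]
      constructor
      · rintro ⟨⟨h1, _⟩, h2⟩; exact absurd (h1.trans h2) (by linarith)
      · rintro ⟨h1, h2⟩; linarith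
    · ext t
      simp only [Set.mem_inter_iff, Set.mem_Ioc, Set.mem_Iio, Set.mem_Ioo,
        max_eq_left h0.le]
      constructor
      · rintro ⟨⟨h1, _⟩, h2⟩; exact ⟨h1, h2⟩
      · rintro ⟨h1, h2⟩; exact ⟨⟨h1, by linarith⟩, h2⟩
  rw [hset, Real.volume_real_Ioo, sub_zero, max_eq_left (le_max_right _ _),
    smul_eq_mul, mul_comm]

lemma sum_step_intble {ι : Type*} (s : Finset ι) (c r : ι → ℝ) :
    IntervalIntegrable (fun t => ∑ i ∈ s, if t < c i then r i else 0) volume 0 1 := by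
  classical
  induction s using Finset.induction with
  | empty => simpa using intervalIntegrable_const
  | insert _ _ h ih =>
      simp only [Finset.sum_insert h]
      exact (step_intble _ _).add ih

lemma sum_step_int {ι : Type*} (s : Finset ι) (c r : ι → ℝ) (hc : ∀ i ∈ s, c i ≤ 1) :
    ∫ t in (0:ℝ)..1, ∑ i ∈ s, (if t < c i then r i else 0)
      = ∑ i ∈ s, r i * max (c i) 0 := by
  rw [intervalIntegral.integral_finset_sum (fun i _ => step_intble (c i) (r i))]
  exact Finset.sum_congr rfl fun i hi => step_int _ _ (hc i hi)


theorem stmt_8 {n : ℕ} (hn : 1 ≤ n)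
    (am : Fin n → ℝ) (ams amo : Fin n → Fin n → ℝ)
    (ham : ∀ j, 0 ≤ am j)
    (hsym : ∀ j k, ams j k = ams k j)
    (hamo : ∀ j k, j ≠ k → amo j k ≤ 0)
    (x : Fin n → ℝ) (hx : ∀ j, x j ∈ Set.Icc (-1:ℝ) 1) :
    ChB (muMinus am ams amo) x =
      -(∑ j ∈ Finset.univ.filter (fun j => x j < 0), am j * x j)
      - (∑ p ∈ (Finset.univ.filter (fun j => x j < 0)).offDiag,
          ams p.1 p.2 * max (x p.1) (x p.2)) / 2
      - ∑ j ∈ Finset.univ.filter (fun j => 0 < x j),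
          ∑ k ∈ Finset.univ.filter (fun k => x k < 0),
            amo j k * max (-x j) (x k) := by
  classical
  have hxl : ∀ j, -1 ≤ x j := fun j => (hx j).1
  have hxu : ∀ j, x j ≤ 1 := fun j => (hx j).2
  -- offDiag of a filtered univ
  have hoff : ∀ (p : Fin n → Prop) (_ : DecidablePred p),
      (Finset.univ.filter p).offDiag
        = Finset.univ.offDiag.filter (fun q => p q.1 ∧ p q.2) := by
    intro p hp
    ext q
    simp only [Finset.mem_offDiag, Finset.mem_filter, Finset.mem_univ, true_and]
    tauto
  -- canonical form of the integrand
  have hstep : ∀ t : ℝ,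
      muMinus am ams amo (Finset.univ.filter (fun j => t < x j))
        (Finset.univ.filter (fun j => x j < -t))
      = (∑ j : Fin n, if t < -x j then am j else 0)
        + (∑ p ∈ Finset.univ.offDiag,
            if t < min (-x p.1) (-x p.2) then ams p.1 p.2 else 0) / 2
        + ∑ p ∈ Finset.univ ×ˢ Finset.univ,
            (if t < min (x p.1) (-x p.2) then amo p.1 p.2 else 0) := by
    intro t
    unfold muMinus pairSum
    congr 1
    · congr 1
      · rw [Finset.sum_filter]
        refine Finset.sum_congr rfl fun j _ => ?_
        congr 1
        exact propext ⟨fun h => by linarith, fun h => by linarith⟩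
      · rw [hoff _ _, Finset.sum_filter]
        congr 1
        refine Finset.sum_congr rfl fun p _ => ?_
        congr 1
        refine propext ⟨fun h => ?_, fun h => ?_⟩
        · rw [lt_min_iff]; exact ⟨by linarith [h.1], by linarith [h.2]⟩
        · rw [lt_min_iff] at h; exact ⟨by linarith [h.1], by linarith [h.2]⟩
    · rw [Finset.sum_product, Finset.sum_filter]
      refine Finset.sum_congr rfl fun j _ => ?_
      by_cases hj : t < x j
      · simp only [hj, if_true]
        rw [Finset.sum_filter]
        refine Finset.sum_congr rfl fun k _ => ?_
        congr 1
        refine propext ⟨fun h => ?_, fun h => ?_⟩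
        · rw [lt_min_iff]; exact ⟨hj, by linarith⟩
        · rw [lt_min_iff] at h; linarith [h.2]
      · simp only [hj, if_false]
        refine (Finset.sum_eq_zero fun k _ => ?_).symm
        rw [if_neg]
        rw [lt_min_iff]
        exact fun h => hj h.1
  unfold ChB
  simp_rw [hstep]
  have I1 : IntervalIntegrable (fun t => ∑ j : Fin n, if t < -x j then am j else 0)
      volume 0 1 := sum_step_intble _ _ _
  have I2 : IntervalIntegrable
      (fun t => (∑ p ∈ Finset.univ.offDiag,
        if t < min (-x p.1) (-x p.2) then ams p.1 p.2 else 0) / 2) volume 0 1 :=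
    (sum_step_intble _ _ _).div_const 2
  have I3 : IntervalIntegrable
      (fun t => ∑ p ∈ Finset.univ ×ˢ Finset.univ,
        (if t < min (x p.1) (-x p.2) then amo p.1 p.2 else 0)) volume 0 1 :=
    sum_step_intble _ _ _
  rw [intervalIntegral.integral_add (I1.add I2) I3, intervalIntegral.integral_add I1 I2,
    intervalIntegral.integral_div]
  rw [sum_step_int _ _ _ (fun j _ => by linarith [hxl j]),
    sum_step_int _ _ _ (fun p _ => (min_le_left _ _).trans (by linarith [hxl p.1])),
    sum_step_int _ _ _ (fun p _ => (min_le_left _ _).trans (hxu p.1))]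
  -- now three algebraic identities
  have E1 : (∑ j : Fin n, am j * max (-x j) 0)
      = -(∑ j ∈ Finset.univ.filter (fun j => x j < 0), am j * x j) := by
    rw [Finset.sum_filter, ← Finset.sum_neg_distrib]
    refine Finset.sum_congr rfl fun j _ => ?_
    by_cases h : x j < 0
    · rw [if_pos h, max_eq_left (by linarith)]; ring
    · rw [if_neg h, max_eq_right (by push_neg at h; linarith), neg_zero, mul_zero]
  have E2 : (∑ p ∈ Finset.univ.offDiag, ams p.1 p.2 * max (min (-x p.1) (-x p.2)) 0)
      = -(∑ p ∈ (Finset.univ.filter (fun j => x j < 0)).offDiag,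
          ams p.1 p.2 * max (x p.1) (x p.2)) := by
    rw [hoff _ _, Finset.sum_filter, ← Finset.sum_neg_distrib]
    refine Finset.sum_congr rfl fun p _ => ?_
    by_cases h : x p.1 < 0 ∧ x p.2 < 0
    · rw [if_pos h]
      have hm : min (-x p.1) (-x p.2) = -max (x p.1) (x p.2) := by
        rw [min_neg_neg]  -- guess; fix if wrong
      rw [hm, max_eq_left (by rcases h with ⟨h1,h2⟩; rcases max_cases (x p.1) (x p.2) with ⟨he,_⟩|⟨he,_⟩ <;> rw [he] <;> linarith)]
      ring
    · rw [if_neg h, neg_zero]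
      have hmax : 0 ≤ max (x p.1) (x p.2) := by
        by_contra hc
        push_neg at hc
        exact h ⟨lt_of_le_of_lt (le_max_left _ _) hc, lt_of_le_of_lt (le_max_right _ _) hc⟩
      have hmin : min (-x p.1) (-x p.2) ≤ 0 := by rw [min_neg_neg]; linarith
      rw [max_eq_right hmin, mul_zero]
  have E3 : (∑ p ∈ Finset.univ ×ˢ Finset.univ,
        amo p.1 p.2 * max (min (x p.1) (-x p.2)) 0)
      = -(∑ j ∈ Finset.univ.filter (fun j => 0 < x j),
          ∑ k ∈ Finset.univ.filter (fun k => x k < 0),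
            amo j k * max (-x j) (x k)) := by
    rw [Finset.sum_product, ← Finset.sum_neg_distrib, Finset.sum_filter]
    refine Finset.sum_congr rfl fun j _ => ?_
    by_cases hj : 0 < x j
    · rw [if_pos hj, ← Finset.sum_neg_distrib, Finset.sum_filter]
      refine Finset.sum_congr rfl fun k _ => ?_
      by_cases hk : x k < 0
      · rw [if_pos hk]
        have hm : min (x j) (-x k) = -max (-x j) (x k) := by
          rw [← min_neg_neg, neg_neg]
        rw [hm, max_eq_left (by rcases max_cases (-x j) (x k) with ⟨he,_⟩|⟨he,_⟩ <;> rw [he] <;> linarith)]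
        ring
      · push_neg at hk
        rw [if_neg (not_lt.mpr hk), max_eq_right (by simp [min_le_iff]; right; linarith), mul_zero]
    · push_neg at hj
      rw [if_neg (not_lt.mpr hj)]
      refine Finset.sum_eq_zero fun k _ => ?_
      rw [max_eq_right (by simp [min_le_iff]; left; linarith), mul_zero]
  rw [E1, E2, E3]
  ring
end

section
/- Let μ⁺, μ⁻ be given by a 2-additive decomposition and let μ̂(C,D) = μ⁺(C,D) − μ⁻(C,D) for all (C,D) ∈ P(J). Then μ̂(C,D) = −μ̂(D,C) for every (C,D) ∈ P(J) if and only if: (1) a_j⁺ = a_j⁻ for every j ∈ J; (2) a_{jk}⁺ = a_{jk}⁻ for every unordered pair {j,k} ⊆ J; and (3) a⁺_{j|k} − a⁻_{j|k} = a⁻_{k|j} − a⁺_{k|j} for every ordered pair (j,k) with j ≠ k. -/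
theorem stmt_9 {n : ℕ} (hn : 1 ≤ n)
    (ap am : Fin n → ℝ) (aps ams apo amo : Fin n → Fin n → ℝ)
    (hap : ∀ j, 0 ≤ ap j) (ham : ∀ j, 0 ≤ am j)
    (hsymp : ∀ j k, aps j k = aps k j) (hsymm : ∀ j k, ams j k = ams k j)
    (hapo : ∀ j k, j ≠ k → apo j k ≤ 0) (hamo : ∀ j k, j ≠ k → amo j k ≤ 0) :
    (∀ C D : Finset (Fin n), Disjoint C D →
        muPlus ap aps apo C D - muMinus am ams amo C D =
          -(muPlus ap aps apo D C - muMinus am ams amo D C)) ↔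
    ((∀ j, ap j = am j) ∧
     (∀ j k, j ≠ k → aps j k = ams j k) ∧
     (∀ j k, j ≠ k → apo j k - amo j k = amo k j - apo k j)) := by
  constructor
  · intro h
    have h1 : ∀ j, ap j = am j := by
      intro j
      have := h {j} ∅ (by simp)
      simp [muPlus, muMinus, pairSum] at this
      linarith
    refine ⟨h1, ?_, ?_⟩
    · intro j k hjk
      have := h {j, k} ∅ (by simp)
      have hod : ({j, k} : Finset (Fin n)).offDiag = {(j, k), (k, j)} := by
        ext ⟨a, b⟩
        simp only [Finset.mem_offDiag, Finset.mem_insert, Finset.mem_singleton,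
          Prod.mk.injEq]
        constructor
        · rintro ⟨(rfl | rfl), (rfl | rfl), hab⟩
          · exact absurd rfl hab
          · exact Or.inl ⟨rfl, rfl⟩
          · exact Or.inr ⟨rfl, rfl⟩
          · exact absurd rfl hab
        · rintro (⟨rfl, rfl⟩ | ⟨rfl, rfl⟩) <;> simp [hjk, hjk.symm]
      simp [muPlus, muMinus, pairSum, hod, Prod.ext_iff, hjk, h1 j, h1 k,
        hsymp j k, hsymm j k] at this
      linarith [this, hsymp j k, hsymm j k]
    · intro j k hjk
      have := h {j} {k} (by simp [hjk, hjk.symm])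
      simp [muPlus, muMinus, pairSum, h1 j, h1 k] at this
      linarith
  · rintro ⟨h1, h2, h3⟩ C D hCD
    have hP : ∀ X : Finset (Fin n), pairSum aps X = pairSum ams X := by
      intro X
      unfold pairSum
      congr 1
      refine Finset.sum_congr rfl fun p hp => ?_
      exact h2 p.1 p.2 (Finset.mem_offDiag.mp hp).2.2
    have hne : ∀ j ∈ C, ∀ k ∈ D, j ≠ k := by
      intro j hj k hk hjk
      exact Finset.disjoint_left.mp hCD hj (hjk ▸ hk)
    have hS : ∑ j ∈ C, ∑ k ∈ D, (apo j k - amo j k) =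
        ∑ j ∈ D, ∑ k ∈ C, (amo j k - apo j k) := by
      rw [Finset.sum_comm]
      refine Finset.sum_congr rfl fun j hj => Finset.sum_congr rfl fun k hk => ?_
      exact h3 k j (hne k hk j hj)
    simp only [Finset.sum_sub_distrib] at hS
    have hC : ∑ j ∈ C, ap j = ∑ j ∈ C, am j := Finset.sum_congr rfl fun j _ => h1 j
    have hD : ∑ j ∈ D, ap j = ∑ j ∈ D, am j := Finset.sum_congr rfl fun j _ => h1 j
    simp only [muPlus, muMinus, hP, hC, hD]
    linarith
end

section
/- Let μ⁺, μ⁻ be given by a 2-additive decomposition and let μ̂(C,D) = μ⁺(C,D) − μ⁻(C,D) for all (C,D) ∈ P(J). Then Ch^B(x,μ̂) = −Ch^B(−x,μ̂) for all x ∈ [−1,1]^n if and only if: (1) a_j⁺ = a_j⁻ for every j ∈ J; (2) a_{jk}⁺ = a_{jk}⁻ for every unordered pair {j,k} ⊆ J; and (3) a⁺_{j|k} − a⁻_{j|k} = a⁻_{k|j} − a⁺_{k|j} for every ordered pair (j,k) with j ≠ k. -/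
open MeasureTheory intervalIntegral

/-! ### Auxiliary definitions and lemmas -/

noncomputable def chi (v t : ℝ) : ℝ := if t < v then 1 else 0
noncomputable def clamp (v : ℝ) : ℝ := min (max v 0) 1

lemma chi_antitone (v : ℝ) : Antitone (chi v) := by
  intro a b hab
  unfold chi
  split_ifs with h1 h2 <;> try norm_num
  exact absurd (lt_of_le_of_lt hab h1) h2

lemma chi_integrable (v : ℝ) : IntervalIntegrable (chi v) volume 0 1 :=
  (chi_antitone v).intervalIntegrable

lemma sum_chi_integrable {ι : Type*} (s : Finset ι) (c v : ι → ℝ) :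
    IntervalIntegrable (fun t => ∑ i ∈ s, c i * chi (v i) t) volume 0 1 := by
  have h := IntervalIntegrable.sum (μ := volume) (a := (0:ℝ)) (b := 1) s
    (f := fun i t => c i * chi (v i) t) (fun i _ => (chi_integrable (v i)).const_mul (c i))
  have : (∑ i ∈ s, fun t => c i * chi (v i) t) = fun t => ∑ i ∈ s, c i * chi (v i) t := by
    funext t; simp [Finset.sum_apply]
  rwa [this] at h

lemma chi_integral (v : ℝ) : ∫ t in (0:ℝ)..1, chi v t = clamp v := by
  rw [intervalIntegral.integral_of_le zero_le_one]
  have h : ∀ t, chi v t = Set.indicator (Set.Iio v) (fun _ => (1:ℝ)) t := by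
    intro t; simp [chi, Set.indicator_apply, Set.mem_Iio]
  simp only [h]
  rw [MeasureTheory.setIntegral_indicator measurableSet_Iio, MeasureTheory.setIntegral_const]
  rcases le_or_gt v 0 with hv | hv
  · have : Set.Ioc (0:ℝ) 1 ∩ Set.Iio v = ∅ := by
      ext t; simp only [Set.mem_inter_iff, Set.mem_Ioc, Set.mem_Iio, Set.mem_empty_iff_false,
        iff_false]
      rintro ⟨⟨h0, _⟩, h2⟩; linarith
    rw [this]
    have : clamp v = 0 := by unfold clamp; rw [max_eq_right hv]; simp
    simp [this]
  · rcases le_or_gt v 1 with hv1 | hv1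
    · have : Set.Ioc (0:ℝ) 1 ∩ Set.Iio v = Set.Ioo 0 v := by
        ext t; simp only [Set.mem_inter_iff, Set.mem_Ioc, Set.mem_Ioo, Set.mem_Iio]
        constructor
        · rintro ⟨⟨h0, _⟩, h2⟩; exact ⟨h0, h2⟩
        · rintro ⟨h0, h2⟩; exact ⟨⟨h0, by linarith⟩, h2⟩
      rw [this, Real.volume_real_Ioo_of_le hv.le]
      have : clamp v = v := by
        unfold clamp; rw [max_eq_left hv.le, min_eq_left hv1]
      rw [this]; simp
    · have : Set.Ioc (0:ℝ) 1 ∩ Set.Iio v = Set.Ioc 0 1 := by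
        ext t; simp only [Set.mem_inter_iff, Set.mem_Ioc, Set.mem_Iio]
        constructor
        · rintro ⟨h1, _⟩; exact h1
        · rintro ⟨h0, h1⟩; exact ⟨⟨h0, h1⟩, by linarith⟩
      rw [this, Real.volume_real_Ioc_of_le zero_le_one]
      have : clamp v = 1 := by
        unfold clamp; rw [min_eq_right]; exact le_max_of_le_left (by linarith)
      rw [this]; norm_num

lemma sum_chi_integral {ι : Type*} (s : Finset ι) (c v : ι → ℝ) :
    ∫ t in (0:ℝ)..1, (∑ i ∈ s, c i * chi (v i) t) = ∑ i ∈ s, c i * clamp (v i) := by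
  rw [intervalIntegral.integral_finset_sum (fun i _ => (chi_integrable (v i)).const_mul (c i))]
  exact Finset.sum_congr rfl fun i _ => by
    rw [intervalIntegral.integral_const_mul, chi_integral]

lemma chi_min (a b t : ℝ) : chi (min a b) t = chi a t * chi b t := by
  unfold chi
  simp only [lt_min_iff]
  split_ifs <;> simp_all

lemma clamp_nonpos {v : ℝ} (hv : v ≤ 0) : clamp v = 0 := by
  unfold clamp; rw [max_eq_right hv]; simp

lemma clamp_one : clamp 1 = 1 := by unfold clamp; norm_num

lemma clamp_min_left {a b : ℝ} (ha : a ≤ 0) : clamp (min a b) = 0 :=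
  clamp_nonpos (le_trans (min_le_left _ _) ha)

lemma clamp_min_right {a b : ℝ} (hb : b ≤ 0) : clamp (min a b) = 0 :=
  clamp_nonpos (le_trans (min_le_right _ _) hb)

lemma offDiag_filter {n : ℕ} (p : Fin n → Prop) [DecidablePred p] :
    (Finset.univ.filter p).offDiag
      = Finset.univ.offDiag.filter (fun q => p q.1 ∧ p q.2) := by
  ext q
  simp only [Finset.mem_offDiag, Finset.mem_filter, Finset.mem_univ, true_and]
  tauto

/-- The explicit closed form of `Ch^B` for a 2-additive decomposition. -/
noncomputable def Gc {n : ℕ} (ap am : Fin n → ℝ) (aps ams apo amo : Fin n → Fin n → ℝ)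
    (x : Fin n → ℝ) : ℝ :=
  (∑ j, ap j * clamp (x j)) - (∑ j, am j * clamp (-x j))
  + (∑ p ∈ Finset.univ.offDiag, aps p.1 p.2 * clamp (min (x p.1) (x p.2))) / 2
  - (∑ p ∈ Finset.univ.offDiag, ams p.1 p.2 * clamp (min (-x p.1) (-x p.2))) / 2
  + ∑ p ∈ Finset.univ ×ˢ Finset.univ,
      (apo p.1 p.2 - amo p.1 p.2) * clamp (min (x p.1) (-x p.2))

lemma decomp {n : ℕ} (ap am : Fin n → ℝ) (aps ams apo amo : Fin n → Fin n → ℝ)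
    (x : Fin n → ℝ) (t : ℝ) :
    muPlus ap aps apo (Finset.univ.filter (fun j => t < x j))
        (Finset.univ.filter (fun j => x j < -t))
      - muMinus am ams amo (Finset.univ.filter (fun j => t < x j))
        (Finset.univ.filter (fun j => x j < -t))
    = (∑ j, ap j * chi (x j) t) - (∑ j, am j * chi (-x j) t)
      + (∑ p ∈ Finset.univ.offDiag, aps p.1 p.2 * chi (min (x p.1) (x p.2)) t) / 2
      - (∑ p ∈ Finset.univ.offDiag, ams p.1 p.2 * chi (min (-x p.1) (-x p.2)) t) / 2
      + ∑ p ∈ Finset.univ ×ˢ Finset.univ,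
          (apo p.1 p.2 - amo p.1 p.2) * chi (min (x p.1) (-x p.2)) t := by
  set C := Finset.univ.filter (fun j => t < x j) with hC
  set D := Finset.univ.filter (fun j => x j < -t) with hD
  have A1 : ∑ j ∈ C, ap j = ∑ j, ap j * chi (x j) t := by
    rw [hC, Finset.sum_filter]
    exact Finset.sum_congr rfl fun j _ => by simp [chi, mul_ite]
  have A2 : ∑ j ∈ D, am j = ∑ j, am j * chi (-x j) t := by
    rw [hD, Finset.sum_filter]
    exact Finset.sum_congr rfl fun j _ => by simp [chi, mul_ite, lt_neg]
  have A3 : ∀ (a : Fin n → Fin n → ℝ) (y : Fin n → ℝ),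
      pairSum a (Finset.univ.filter (fun j => t < y j))
        = (∑ p ∈ Finset.univ.offDiag, a p.1 p.2 * chi (min (y p.1) (y p.2)) t) / 2 := by
    intro a y
    unfold pairSum
    rw [offDiag_filter, Finset.sum_filter]
    congr 1
    exact Finset.sum_congr rfl fun p _ => by
      simp [chi, mul_ite, lt_min_iff]
  have A3' : pairSum ams D
      = (∑ p ∈ Finset.univ.offDiag, ams p.1 p.2 * chi (min (-x p.1) (-x p.2)) t) / 2 := by
    have : D = Finset.univ.filter (fun j => t < -x j) := by
      rw [hD]; congr 1; funext j; simp [lt_neg]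
    rw [this, A3 ams (fun j => -x j)]
  have A4 : ∀ (b : Fin n → Fin n → ℝ), (∑ j ∈ C, ∑ k ∈ D, b j k)
      = ∑ p ∈ Finset.univ ×ˢ Finset.univ, b p.1 p.2 * chi (min (x p.1) (-x p.2)) t := by
    intro b
    rw [Finset.sum_product, hC, Finset.sum_filter]
    apply Finset.sum_congr rfl
    intro j _
    by_cases hj : t < x j
    · rw [if_pos hj, hD, Finset.sum_filter]
      apply Finset.sum_congr rfl
      intro k _
      have h1 : chi (min (x j) (-x k)) t = chi (-x k) t := by
        rw [chi_min]; unfold chi; rw [if_pos hj]; ring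
      rw [h1]
      simp [chi, mul_ite, lt_neg]
    · rw [if_neg hj]
      symm
      apply Finset.sum_eq_zero
      intro k _
      have : chi (min (x j) (-x k)) t = 0 := by
        unfold chi; rw [if_neg]; intro hlt; exact hj (lt_of_lt_of_le hlt (min_le_left _ _))
      rw [this, mul_zero]
  have A5 : ∑ p ∈ Finset.univ ×ˢ Finset.univ,
      (apo p.1 p.2 - amo p.1 p.2) * chi (min (x p.1) (-x p.2)) t
      = (∑ p ∈ Finset.univ ×ˢ Finset.univ, apo p.1 p.2 * chi (min (x p.1) (-x p.2)) t)
        - ∑ p ∈ Finset.univ ×ˢ Finset.univ, amo p.1 p.2 * chi (min (x p.1) (-x p.2)) t := by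
    rw [← Finset.sum_sub_distrib]
    exact Finset.sum_congr rfl fun p _ => by ring
  unfold muPlus muMinus
  rw [A1, A2, A3 aps x, A3', A4 apo, A4 amo, A5]
  ring

lemma ChB_eq {n : ℕ} (ap am : Fin n → ℝ) (aps ams apo amo : Fin n → Fin n → ℝ)
    (x : Fin n → ℝ) :
    ChB (fun C D => muPlus ap aps apo C D - muMinus am ams amo C D) x
      = Gc ap am aps ams apo amo x := by
  unfold ChB Gc
  simp only [decomp ap am aps ams apo amo x]
  have IA := sum_chi_integrable Finset.univ ap x
  have IB := sum_chi_integrable Finset.univ am (fun j => -x j)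
  have IP := sum_chi_integrable Finset.univ.offDiag (fun p => aps p.1 p.2)
    (fun p => min (x p.1) (x p.2))
  have IQ := sum_chi_integrable Finset.univ.offDiag (fun p => ams p.1 p.2)
    (fun p => min (-x p.1) (-x p.2))
  have IX := sum_chi_integrable (Finset.univ ×ˢ Finset.univ)
    (fun p => apo p.1 p.2 - amo p.1 p.2) (fun p => min (x p.1) (-x p.2))
  rw [intervalIntegral.integral_add (((IA.sub IB).add (IP.div_const 2)).sub (IQ.div_const 2)) IX,
    intervalIntegral.integral_sub ((IA.sub IB).add (IP.div_const 2)) (IQ.div_const 2),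
    intervalIntegral.integral_add (IA.sub IB) (IP.div_const 2),
    intervalIntegral.integral_sub IA IB,
    intervalIntegral.integral_div, intervalIntegral.integral_div,
    sum_chi_integral, sum_chi_integral, sum_chi_integral, sum_chi_integral, sum_chi_integral]
lemma Gc_neg {n : ℕ} (ap am : Fin n → ℝ) (aps ams apo amo : Fin n → Fin n → ℝ)
    (x : Fin n → ℝ) :
    Gc ap am aps ams apo amo (-x)
      = (∑ j, ap j * clamp (-x j)) - (∑ j, am j * clamp (x j))
        + (∑ p ∈ Finset.univ.offDiag, aps p.1 p.2 * clamp (min (-x p.1) (-x p.2))) / 2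
        - (∑ p ∈ Finset.univ.offDiag, ams p.1 p.2 * clamp (min (x p.1) (x p.2))) / 2
        + ∑ p ∈ Finset.univ ×ˢ Finset.univ,
            (apo p.1 p.2 - amo p.1 p.2) * clamp (min (-x p.1) (x p.2)) := by
  unfold Gc
  simp only [Pi.neg_apply, neg_neg]

lemma sum_swap {n : ℕ} (f : Fin n → Fin n → ℝ) :
    ∑ p ∈ Finset.univ ×ˢ Finset.univ, f p.1 p.2
      = ∑ p ∈ Finset.univ ×ˢ Finset.univ, f p.2 p.1 := by
  rw [Finset.sum_product, Finset.sum_product]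
  exact Finset.sum_comm

/-- the ⇐ direction -/
lemma back_dir {n : ℕ} (ap am : Fin n → ℝ) (aps ams apo amo : Fin n → Fin n → ℝ)
    (h1 : ∀ j, ap j = am j)
    (h2 : ∀ j k, j ≠ k → aps j k = ams j k)
    (h3 : ∀ j k, j ≠ k → apo j k - amo j k = amo k j - apo k j)
    (x : Fin n → ℝ) :
    Gc ap am aps ams apo amo x + Gc ap am aps ams apo amo (-x) = 0 := by
  rw [Gc_neg]
  unfold Gc
  have e3x : (∑ p ∈ Finset.univ.offDiag, aps p.1 p.2 * clamp (min (x p.1) (x p.2)))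
        = ∑ p ∈ Finset.univ.offDiag, ams p.1 p.2 * clamp (min (x p.1) (x p.2)) :=
    Finset.sum_congr rfl fun p hp => by rw [h2 p.1 p.2 (Finset.mem_offDiag.mp hp).2.2]
  have e3mx : (∑ p ∈ Finset.univ.offDiag, aps p.1 p.2 * clamp (min (-x p.1) (-x p.2)))
        = ∑ p ∈ Finset.univ.offDiag, ams p.1 p.2 * clamp (min (-x p.1) (-x p.2)) :=
    Finset.sum_congr rfl fun p hp => by rw [h2 p.1 p.2 (Finset.mem_offDiag.mp hp).2.2]
  have e5 : (∑ p ∈ Finset.univ ×ˢ Finset.univ,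
        (apo p.1 p.2 - amo p.1 p.2) * clamp (min (x p.1) (-x p.2)))
      + (∑ p ∈ Finset.univ ×ˢ Finset.univ,
        (apo p.1 p.2 - amo p.1 p.2) * clamp (min (-x p.1) (x p.2))) = 0 := by
    have swap : (∑ p ∈ Finset.univ ×ˢ Finset.univ,
        (apo p.1 p.2 - amo p.1 p.2) * clamp (min (-x p.1) (x p.2)))
        = ∑ p ∈ Finset.univ ×ˢ Finset.univ,
        (apo p.2 p.1 - amo p.2 p.1) * clamp (min (x p.1) (-x p.2)) := by
      rw [sum_swap (fun j k => (apo j k - amo j k) * clamp (min (-x j) (x k)))]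
      exact Finset.sum_congr rfl fun p _ => by rw [min_comm]
    rw [swap, ← Finset.sum_add_distrib]
    apply Finset.sum_eq_zero
    intro p _
    by_cases hp : p.1 = p.2
    · have : min (x p.1) (-x p.2) ≤ 0 := by
        rw [hp]
        rcases le_total (x p.2) 0 with h | h
        · exact le_trans (min_le_left _ _) h
        · exact le_trans (min_le_right _ _) (by linarith)
      rw [clamp_nonpos this]; ring
    · have := h3 p.1 p.2 hp
      have hz : (apo p.1 p.2 - amo p.1 p.2) + (apo p.2 p.1 - amo p.2 p.1) = 0 := by linarith
      rw [← add_mul, hz, zero_mul]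
  simp only [h1]
  rw [e3x, e3mx] at *
  linarith [e5]

lemma sum_clamp_single {n : ℕ} (c : Fin n → ℝ) (y : Fin n → ℝ) (j : Fin n)
    (h : ∀ i, clamp (y i) = if i = j then 1 else 0) :
    ∑ i, c i * clamp (y i) = c j := by
  simp only [h, mul_ite, mul_one, mul_zero]
  simp

lemma sum_clamp_pairvals {n : ℕ} (c : Fin n → ℝ) (y : Fin n → ℝ) (j k : Fin n) (hjk : j ≠ k)
    (h : ∀ i, clamp (y i) = if i = j ∨ i = k then 1 else 0) :
    ∑ i, c i * clamp (y i) = c j + c k := by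
  simp only [h, mul_ite, mul_one, mul_zero]
  have key : ∀ i, (if i = j ∨ i = k then c i else 0)
      = (if i = j then c i else 0) + (if i = k then c i else 0) := by
    intro i
    by_cases h1 : i = j
    · subst h1; simp [hjk]
    · by_cases h2 : i = k
      · subst h2; simp [Ne.symm hjk]
      · simp [h1, h2]
  simp only [key, Finset.sum_add_distrib]
  simp

lemma sum_clamp_zero {ι : Type*} (s : Finset ι) (c : ι → ℝ) (y : ι → ℝ)
    (h : ∀ i ∈ s, clamp (y i) = 0) :
    ∑ i ∈ s, c i * clamp (y i) = 0 :=
  Finset.sum_eq_zero fun i hi => by rw [h i hi, mul_zero]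

-- pair sum over offDiag when at most coordinate j is positive
lemma offDiag_zero {n : ℕ} (c : Fin n → Fin n → ℝ) (y : Fin n → ℝ) (j : Fin n)
    (h : ∀ i, i ≠ j → y i ≤ 0) :
    ∑ p ∈ Finset.univ.offDiag, c p.1 p.2 * clamp (min (y p.1) (y p.2)) = 0 := by
  apply Finset.sum_eq_zero
  intro p hp
  have hne := (Finset.mem_offDiag.mp hp).2.2
  by_cases h1 : p.1 = j
  · have h2 : p.2 ≠ j := fun hc => hne (h1.trans hc.symm)
    rw [clamp_min_right (h _ h2), mul_zero]
  · rw [clamp_min_left (h _ h1), mul_zero]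

lemma offDiag_pair {n : ℕ} (c : Fin n → Fin n → ℝ) (y : Fin n → ℝ) (j k : Fin n) (hjk : j ≠ k)
    (hy : ∀ i, i ≠ j → i ≠ k → y i ≤ 0) (hyj : y j = 1) (hyk : y k = 1) :
    ∑ p ∈ Finset.univ.offDiag, c p.1 p.2 * clamp (min (y p.1) (y p.2))
      = c j k + c k j := by
  have hne : ((j,k) : Fin n × Fin n) ≠ (k,j) := fun h => hjk (congrArg Prod.fst h)
  have hsub : ({(j,k),(k,j)} : Finset (Fin n × Fin n)) ⊆ Finset.univ.offDiag := by
    intro p hp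
    simp only [Finset.mem_insert, Finset.mem_singleton] at hp
    rcases hp with rfl | rfl
    · exact Finset.mem_offDiag.mpr ⟨Finset.mem_univ _, Finset.mem_univ _, hjk⟩
    · exact Finset.mem_offDiag.mpr ⟨Finset.mem_univ _, Finset.mem_univ _, hjk.symm⟩
  rw [← Finset.sum_subset hsub]
  · rw [Finset.sum_pair hne]
    simp [hyj, hyk, clamp_one]
  · intro p hp hnp
    have hned := (Finset.mem_offDiag.mp hp).2.2
    simp only [Finset.mem_insert, Finset.mem_singleton] at hnp
    push_neg at hnp
    obtain ⟨hnp1, hnp2⟩ := hnp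
    by_cases h1 : p.1 = j
    · have h2 : p.2 ≠ k := fun hc => hnp1 (Prod.ext h1 hc)
      have h3 : p.2 ≠ j := fun hc => hned (h1.trans hc.symm)
      rw [clamp_min_right (hy _ h3 h2), mul_zero]
    · by_cases h1' : p.1 = k
      · have h2 : p.2 ≠ j := fun hc => hnp2 (Prod.ext h1' hc)
        have h3 : p.2 ≠ k := fun hc => hned (h1'.trans hc.symm)
        rw [clamp_min_right (hy _ h2 h3), mul_zero]
      · rw [clamp_min_left (hy _ h1 h1'), mul_zero]

lemma cross_zero_right {n : ℕ} (c : Fin n → Fin n → ℝ) (u v : Fin n → ℝ)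
    (h : ∀ i, v i ≤ 0) :
    ∑ p ∈ Finset.univ ×ˢ Finset.univ, c p.1 p.2 * clamp (min (u p.1) (v p.2)) = 0 :=
  Finset.sum_eq_zero fun p _ => by rw [clamp_min_right (h p.2), mul_zero]

lemma cross_zero_left {n : ℕ} (c : Fin n → Fin n → ℝ) (u v : Fin n → ℝ)
    (h : ∀ i, u i ≤ 0) :
    ∑ p ∈ Finset.univ ×ˢ Finset.univ, c p.1 p.2 * clamp (min (u p.1) (v p.2)) = 0 :=
  Finset.sum_eq_zero fun p _ => by rw [clamp_min_left (h p.1), mul_zero]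

lemma cross_single {n : ℕ} (c : Fin n → Fin n → ℝ) (u v : Fin n → ℝ) (j k : Fin n)
    (hu : ∀ i, i ≠ j → u i ≤ 0) (hv : ∀ i, i ≠ k → v i ≤ 0)
    (huj : u j = 1) (hvk : v k = 1) :
    ∑ p ∈ Finset.univ ×ˢ Finset.univ, c p.1 p.2 * clamp (min (u p.1) (v p.2))
      = c j k := by
  have h0 : ∀ p ∈ Finset.univ ×ˢ Finset.univ, p ≠ ((j,k) : Fin n × Fin n) →
      c p.1 p.2 * clamp (min (u p.1) (v p.2)) = 0 := by
    intro p _ hp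
    by_cases h1 : p.1 = j
    · have h2 : p.2 ≠ k := fun hc => hp (Prod.ext h1 hc)
      rw [clamp_min_right (hv _ h2), mul_zero]
    · rw [clamp_min_left (hu _ h1), mul_zero]
  calc ∑ p ∈ Finset.univ ×ˢ Finset.univ, c p.1 p.2 * clamp (min (u p.1) (v p.2))
      = c ((j,k) : Fin n × Fin n).1 ((j,k) : Fin n × Fin n).2
        * clamp (min (u ((j,k) : Fin n × Fin n).1) (v ((j,k) : Fin n × Fin n).2)) :=
        Finset.sum_eq_single_of_mem _ (by simp) h0
    _ = c j k := by simp [huj, hvk, clamp_one]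


theorem stmt_10 {n : ℕ} (hn : 1 ≤ n)
    (ap am : Fin n → ℝ) (aps ams apo amo : Fin n → Fin n → ℝ)
    (hap : ∀ j, 0 ≤ ap j) (ham : ∀ j, 0 ≤ am j)
    (hsymp : ∀ j k, aps j k = aps k j) (hsymm : ∀ j k, ams j k = ams k j)
    (hapo : ∀ j k, j ≠ k → apo j k ≤ 0) (hamo : ∀ j k, j ≠ k → amo j k ≤ 0) :
    (∀ x : Fin n → ℝ, (∀ j, x j ∈ Set.Icc (-1:ℝ) 1) →
        ChB (fun C D => muPlus ap aps apo C D - muMinus am ams amo C D) x =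
          -ChB (fun C D => muPlus ap aps apo C D - muMinus am ams amo C D) (-x)) ↔
    ((∀ j, ap j = am j) ∧
     (∀ j k, j ≠ k → aps j k = ams j k) ∧
     (∀ j k, j ≠ k → apo j k - amo j k = amo k j - apo k j)) := by
  constructor
  · intro H
    have key : ∀ x : Fin n → ℝ, (∀ j, x j ∈ Set.Icc (-1:ℝ) 1) →
        Gc ap am aps ams apo amo x + Gc ap am aps ams apo amo (-x) = 0 := by
      intro x hx
      have h := H x hx
      rw [ChB_eq, ChB_eq] at h
      linarith
    have part1 : ∀ j, ap j = am j := by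
      intro j
      set x : Fin n → ℝ := fun i => if i = j then 1 else 0 with hxdef
      have hx : ∀ i, x i ∈ Set.Icc (-1:ℝ) 1 := by
        intro i; rw [hxdef]; dsimp only; split_ifs <;> constructor <;> norm_num
      have hclx : ∀ i, clamp (x i) = if i = j then 1 else 0 := by
        intro i; rw [hxdef]; dsimp only; split_ifs
        · exact clamp_one
        · exact clamp_nonpos le_rfl
      have hnx : ∀ i, -x i ≤ 0 := by
        intro i; rw [hxdef]; dsimp only; split_ifs <;> norm_num
      have hxne : ∀ i, i ≠ j → x i ≤ 0 := by
        intro i hi; rw [hxdef]; dsimp only; rw [if_neg hi]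
      have g1 : Gc ap am aps ams apo amo x = ap j := by
        unfold Gc
        rw [sum_clamp_single ap x j hclx,
          sum_clamp_zero Finset.univ am (fun i => -x i) (fun i _ => clamp_nonpos (hnx i)),
          offDiag_zero aps x j hxne,
          offDiag_zero ams (fun i => -x i) j (fun i _ => hnx i),
          cross_zero_right (fun a b => apo a b - amo a b) x (fun i => -x i) hnx]
        ring
      have g2 : Gc ap am aps ams apo amo (-x) = -(am j) := by
        rw [Gc_neg]
        rw [sum_clamp_zero Finset.univ ap (fun i => -x i) (fun i _ => clamp_nonpos (hnx i)),
          sum_clamp_single am x j hclx,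
          offDiag_zero aps (fun i => -x i) j (fun i _ => hnx i),
          offDiag_zero ams x j hxne,
          cross_zero_left (fun a b => apo a b - amo a b) (fun i => -x i) x hnx]
        ring
      have hk := key x hx
      rw [g1, g2] at hk
      linarith
    refine ⟨part1, ?_, ?_⟩
    · intro j k hjk
      set x : Fin n → ℝ := fun i => if i = j ∨ i = k then 1 else 0 with hxdef
      have hx : ∀ i, x i ∈ Set.Icc (-1:ℝ) 1 := by
        intro i; rw [hxdef]; dsimp only; split_ifs <;> constructor <;> norm_num
      have hclx : ∀ i, clamp (x i) = if i = j ∨ i = k then 1 else 0 := by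
        intro i; rw [hxdef]; dsimp only; split_ifs
        · exact clamp_one
        · exact clamp_nonpos le_rfl
      have hnx : ∀ i, -x i ≤ 0 := by
        intro i; rw [hxdef]; dsimp only; split_ifs <;> norm_num
      have hxne : ∀ i, i ≠ j → i ≠ k → x i ≤ 0 := by
        intro i hi1 hi2; rw [hxdef]; dsimp only
        rw [if_neg (by tauto)]
      have hxj : x j = 1 := by rw [hxdef]; dsimp only; rw [if_pos (Or.inl rfl)]
      have hxk : x k = 1 := by rw [hxdef]; dsimp only; rw [if_pos (Or.inr rfl)]
      have g1 : Gc ap am aps ams apo amo x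
          = (ap j + ap k) + (aps j k + aps k j) / 2 := by
        unfold Gc
        rw [sum_clamp_pairvals ap x j k hjk hclx,
          sum_clamp_zero Finset.univ am (fun i => -x i) (fun i _ => clamp_nonpos (hnx i)),
          offDiag_pair aps x j k hjk hxne hxj hxk,
          offDiag_zero ams (fun i => -x i) j (fun i _ => hnx i),
          cross_zero_right (fun a b => apo a b - amo a b) x (fun i => -x i) hnx]
        ring
      have g2 : Gc ap am aps ams apo amo (-x)
          = -((am j + am k) + (ams j k + ams k j) / 2) := by
        rw [Gc_neg]
        rw [sum_clamp_zero Finset.univ ap (fun i => -x i) (fun i _ => clamp_nonpos (hnx i)),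
          sum_clamp_pairvals am x j k hjk hclx,
          offDiag_zero aps (fun i => -x i) j (fun i _ => hnx i),
          offDiag_pair ams x j k hjk hxne hxj hxk,
          cross_zero_left (fun a b => apo a b - amo a b) (fun i => -x i) x hnx]
        ring
      have hk := key x hx
      rw [g1, g2] at hk
      have e1 := part1 j
      have e2 := part1 k
      have e3 := hsymp j k
      have e4 := hsymm j k
      linarith
    · intro j k hjk
      set x : Fin n → ℝ := fun i => if i = j then 1 else if i = k then -1 else 0 with hxdef
      have hx : ∀ i, x i ∈ Set.Icc (-1:ℝ) 1 := by
        intro i; rw [hxdef]; dsimp only; split_ifs <;> constructor <;> norm_num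
      have hclx : ∀ i, clamp (x i) = if i = j then 1 else 0 := by
        intro i; rw [hxdef]; dsimp only; split_ifs
        · exact clamp_one
        · exact clamp_nonpos (by norm_num)
        · exact clamp_nonpos le_rfl
      have hclmx : ∀ i, clamp (-x i) = if i = k then 1 else 0 := by
        intro i; rw [hxdef]; dsimp only
        by_cases h1 : i = j
        · rw [if_pos h1, if_neg (h1 ▸ hjk)]
          exact clamp_nonpos (by norm_num)
        · rw [if_neg h1]
          by_cases h2 : i = k
          · rw [if_pos h2, if_pos h2]; norm_num; exact clamp_one
          · rw [if_neg h2, if_neg h2]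
            simpa using clamp_nonpos (le_refl (0:ℝ))
      have hxne : ∀ i, i ≠ j → x i ≤ 0 := by
        intro i hi; rw [hxdef]; dsimp only; rw [if_neg hi]; split_ifs <;> norm_num
      have hmxne : ∀ i, i ≠ k → -x i ≤ 0 := by
        intro i hi; rw [hxdef]; dsimp only
        by_cases h1 : i = j
        · rw [if_pos h1]; norm_num
        · rw [if_neg h1, if_neg hi]; norm_num
      have hxj : x j = 1 := by rw [hxdef]; dsimp only; rw [if_pos rfl]
      have hmxk : -x k = 1 := by
        rw [hxdef]; dsimp only; rw [if_neg (Ne.symm hjk), if_pos rfl]; norm_num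
      have g1 : Gc ap am aps ams apo amo x
          = ap j - am k + (apo j k - amo j k) := by
        unfold Gc
        rw [sum_clamp_single ap x j hclx,
          sum_clamp_single am (fun i => -x i) k hclmx,
          offDiag_zero aps x j hxne,
          offDiag_zero ams (fun i => -x i) k hmxne,
          cross_single (fun a b => apo a b - amo a b) x (fun i => -x i) j k
            hxne hmxne hxj hmxk]
        ring
      have g2 : Gc ap am aps ams apo amo (-x)
          = ap k - am j + (apo k j - amo k j) := by
        rw [Gc_neg]
        rw [sum_clamp_single ap (fun i => -x i) k hclmx,
          sum_clamp_single am x j hclx,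
          offDiag_zero aps (fun i => -x i) k hmxne,
          offDiag_zero ams x j hxne,
          cross_single (fun a b => apo a b - amo a b) (fun i => -x i) x k j
            hmxne hxne hmxk hxj]
        ring
      have hk := key x hx
      rw [g1, g2] at hk
      have e1 := part1 j
      have e2 := part1 k
      linarith
  · rintro ⟨h1, h2, h3⟩ x hx
    rw [ChB_eq, ChB_eq]
    have := back_dir ap am aps ams apo amo h1 h2 h3 x
    linarith
end

section
/- Let μ⁺, μ⁻ be given by a 2-additive decomposition. Then μ⁺(C,D) = μ⁻(D,C) for every (C,D) ∈ P(J) if and only if: (1) a_j⁺ = a_j⁻ for every j ∈ J; (2) a_{jk}⁺ = a_{jk}⁻ for every unordered pair {j,k} ⊆ J; and (3) a⁺_{j|k} = a⁻_{k|j} for every ordered pair (j,k) with j ≠ k. -/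
lemma offDiag_pair_s11 {n : ℕ} {j k : Fin n} (h : j ≠ k) :
    ({j, k} : Finset (Fin n)).offDiag = {(j, k), (k, j)} := by
  ext ⟨a, b⟩
  simp only [Finset.mem_offDiag, Finset.mem_insert, Finset.mem_singleton, Prod.ext_iff]
  constructor
  · rintro ⟨(rfl | rfl), (rfl | rfl), hne⟩ <;> tauto
  · rintro (⟨rfl, rfl⟩ | ⟨rfl, rfl⟩) <;> simp [h, h.symm]

theorem stmt_11 {n : ℕ} (hn : 1 ≤ n)
    (ap am : Fin n → ℝ) (aps ams apo amo : Fin n → Fin n → ℝ)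
    (hap : ∀ j, 0 ≤ ap j) (ham : ∀ j, 0 ≤ am j)
    (hsymp : ∀ j k, aps j k = aps k j) (hsymm : ∀ j k, ams j k = ams k j)
    (hapo : ∀ j k, j ≠ k → apo j k ≤ 0) (hamo : ∀ j k, j ≠ k → amo j k ≤ 0) :
    (∀ C D : Finset (Fin n), Disjoint C D →
        muPlus ap aps apo C D = muMinus am ams amo D C) ↔
    ((∀ j, ap j = am j) ∧
     (∀ j k, j ≠ k → aps j k = ams j k) ∧
     (∀ j k, j ≠ k → apo j k = amo k j)) := by
  constructor
  · intro h
    have h1 : ∀ j, ap j = am j := by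
      intro j
      have := h {j} ∅ (Finset.disjoint_empty_right _)
      simpa [muPlus, muMinus, pairSum] using this
    refine ⟨h1, ?_, ?_⟩
    · intro j k hjk
      have := h {j, k} ∅ (Finset.disjoint_empty_right _)
      simp only [muPlus, muMinus, pairSum, Finset.sum_empty, Finset.offDiag_empty,
        offDiag_pair_s11 hjk] at this
      rw [Finset.sum_insert (by simp [hjk]), Finset.sum_singleton,
        Finset.sum_insert (by simp [hjk]), Finset.sum_singleton,
        Finset.sum_pair hjk, Finset.sum_pair hjk,
        Finset.sum_pair (show ((j,k) : Fin n × Fin n) ≠ (k,j) by simp [hjk])] at this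
      have hs := hsymp j k
      have hs' := hsymm j k
      have e1 := h1 j
      have e2 := h1 k
      simp only at this
      linarith
    · intro j k hjk
      have := h {j} {k} (Finset.disjoint_singleton.mpr hjk)
      simp only [muPlus, muMinus, pairSum, Finset.offDiag_singleton, Finset.sum_empty,
        Finset.sum_singleton] at this
      have e1 := h1 j
      linarith
  · rintro ⟨h1, h2, h3⟩ C D hCD
    simp only [muPlus, muMinus]
    have hps : pairSum aps C = pairSum ams C := by
      unfold pairSum
      congr 1
      apply Finset.sum_congr rfl
      intro p hp
      exact h2 p.1 p.2 (Finset.mem_offDiag.mp hp).2.2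
    have hpt : ∑ j ∈ C, ap j = ∑ j ∈ C, am j := Finset.sum_congr rfl fun j _ => h1 j
    have ho : ∑ j ∈ C, ∑ k ∈ D, apo j k = ∑ j ∈ D, ∑ k ∈ C, amo j k := by
      rw [Finset.sum_comm]
      apply Finset.sum_congr rfl
      intro k hk
      apply Finset.sum_congr rfl
      intro j hj
      exact h3 j k (fun e => (Finset.disjoint_left.mp hCD (e ▸ hj) hk))
    rw [hps, hpt, ho]
end

section
/- Let μ⁺, μ⁻ be given by a 2-additive decomposition. Then Ch^{B+}(x,μ⁺) = Ch^{B−}(−x,μ⁻) for all x ∈ [−1,1]^n if and only if: (1) a_j⁺ = a_j⁻ for every j ∈ J; (2) a_{jk}⁺ = a_{jk}⁻ for every unordered pair {j,k} ⊆ J; and (3) a⁺_{j|k} = a⁻_{k|j} for every ordered pair (j,k) with j ≠ k. -/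
lemma ChB_const {n : ℕ} (μ : Finset (Fin n) → Finset (Fin n) → ℝ) (x : Fin n → ℝ)
    (C D : Finset (Fin n))
    (hC : ∀ t ∈ Set.Ioo (0:ℝ) 1, Finset.univ.filter (fun j => t < x j) = C)
    (hD : ∀ t ∈ Set.Ioo (0:ℝ) 1, Finset.univ.filter (fun j => x j < -t) = D) :
    ChB μ x = μ C D := by
  unfold ChB
  rw [intervalIntegral.integral_of_le zero_le_one,
    MeasureTheory.integral_Ioc_eq_integral_Ioo,
    MeasureTheory.setIntegral_congr_fun measurableSet_Ioo
      (g := fun _ => μ C D) (fun t ht => by rw [hC t ht, hD t ht])]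
  simp

lemma pairSum_pair {n : ℕ} (a : Fin n → Fin n → ℝ) {j k : Fin n} (h : j ≠ k) :
    pairSum a {j, k} = (a j k + a k j) / 2 := by
  have hod : ({j, k} : Finset (Fin n)).offDiag = {(j, k), (k, j)} := by
    ext p
    simp only [Finset.mem_offDiag, Finset.mem_insert, Finset.mem_singleton, Prod.ext_iff]
    constructor
    · rintro ⟨h1 | h1, h2 | h2, h3⟩ <;> simp_all <;> tauto
    · rintro (⟨h1, h2⟩ | ⟨h1, h2⟩) <;> subst h1 <;> subst h2 <;> simp [h, h.symm]
  rw [pairSum, hod, Finset.sum_insert (by simp [Prod.ext_iff, h]), Finset.sum_singleton]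
lemma filter_pos_eq {n : ℕ} (x : Fin n → ℝ) (hx : ∀ j, x j = -1 ∨ x j = 0 ∨ x j = 1)
    (t : ℝ) (ht : t ∈ Set.Ioo (0:ℝ) 1) :
    Finset.univ.filter (fun j => t < x j) = Finset.univ.filter (fun j => x j = 1) := by
  ext i
  simp only [Finset.mem_filter, Finset.mem_univ, true_and]
  constructor
  · intro h'
    rcases hx i with h | h | h
    · rw [h] at h'; linarith [ht.1]
    · rw [h] at h'; linarith [ht.1]
    · exact h
  · intro h'; rw [h']; exact ht.2

lemma filter_neg_eq {n : ℕ} (x : Fin n → ℝ) (hx : ∀ j, x j = -1 ∨ x j = 0 ∨ x j = 1)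
    (t : ℝ) (ht : t ∈ Set.Ioo (0:ℝ) 1) :
    Finset.univ.filter (fun j => x j < -t) = Finset.univ.filter (fun j => x j = -1) := by
  ext i
  simp only [Finset.mem_filter, Finset.mem_univ, true_and]
  constructor
  · intro h'
    rcases hx i with h | h | h
    · exact h
    · rw [h] at h'; linarith [ht.1]
    · rw [h] at h'; linarith [ht.1]
  · intro h'; rw [h']; simpa using ht.2

/-- Combined evaluator: if `x` takes values in `{-1,0,1}` then
`ChB μ x = μ ({x = 1}) ({x = -1})`. -/
lemma ChB_eval {n : ℕ} (μ : Finset (Fin n) → Finset (Fin n) → ℝ) (x : Fin n → ℝ)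
    (hx : ∀ j, x j = -1 ∨ x j = 0 ∨ x j = 1) (C D : Finset (Fin n))
    (hC : Finset.univ.filter (fun j => x j = 1) = C)
    (hD : Finset.univ.filter (fun j => x j = -1) = D) :
    ChB μ x = μ C D :=
  ChB_const μ x C D
    (fun t ht => by rw [filter_pos_eq x hx t ht, hC])
    (fun t ht => by rw [filter_neg_eq x hx t ht, hD])

lemma filter_negx_pos {n : ℕ} (x : Fin n → ℝ) :
    Finset.univ.filter (fun i => (-x) i = 1) = Finset.univ.filter (fun i => x i = -1) := by
  ext i
  simp only [Finset.mem_filter, Finset.mem_univ, true_and, Pi.neg_apply]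
  constructor <;> intro h <;> linarith

lemma filter_negx_neg {n : ℕ} (x : Fin n → ℝ) :
    Finset.univ.filter (fun i => (-x) i = -1) = Finset.univ.filter (fun i => x i = 1) := by
  ext i
  simp only [Finset.mem_filter, Finset.mem_univ, true_and, Pi.neg_apply]
  constructor <;> intro h <;> linarith

lemma integrand_eq {n : ℕ} (ap am : Fin n → ℝ) (aps ams apo amo : Fin n → Fin n → ℝ)
    (h1 : ∀ j, ap j = am j) (h2 : ∀ j k, j ≠ k → aps j k = ams j k)
    (h3 : ∀ j k, j ≠ k → apo j k = amo k j)
    (x : Fin n → ℝ) (t : ℝ) (ht : 0 ≤ t) :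
    muPlus ap aps apo (Finset.univ.filter (fun j => t < x j))
        (Finset.univ.filter (fun j => x j < -t)) =
    muMinus am ams amo (Finset.univ.filter (fun j => t < (-x) j))
        (Finset.univ.filter (fun j => (-x) j < -t)) := by
  set C := Finset.univ.filter (fun j => t < x j) with hCdef
  set D := Finset.univ.filter (fun j => x j < -t) with hDdef
  have hC' : Finset.univ.filter (fun j => t < (-x) j) = D := by
    ext i; simp only [hDdef, Finset.mem_filter, Finset.mem_univ, true_and, Pi.neg_apply]
    constructor <;> intro h <;> linarith
  have hD' : Finset.univ.filter (fun j => (-x) j < -t) = C := by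
    ext i; simp only [hCdef, Finset.mem_filter, Finset.mem_univ, true_and, Pi.neg_apply]
    constructor <;> intro h <;> linarith
  rw [hC', hD']
  have hne : ∀ j ∈ C, ∀ k ∈ D, j ≠ k := by
    intro j hj k hk h
    subst h
    rw [hCdef, Finset.mem_filter] at hj
    rw [hDdef, Finset.mem_filter] at hk
    linarith [hj.2, hk.2]
  unfold muPlus muMinus
  congr 1
  · congr 1
    · exact Finset.sum_congr rfl fun j _ => h1 j
    · unfold pairSum
      congr 1
      refine Finset.sum_congr rfl fun p hp => ?_
      exact h2 p.1 p.2 (Finset.mem_offDiag.mp hp).2.2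
  · rw [Finset.sum_comm]
    exact Finset.sum_congr rfl fun j hj => Finset.sum_congr rfl fun k hk =>
      h3 k j (hne k hk j hj)

theorem stmt_12 {n : ℕ} (hn : 1 ≤ n)
    (ap am : Fin n → ℝ) (aps ams apo amo : Fin n → Fin n → ℝ)
    (hap : ∀ j, 0 ≤ ap j) (ham : ∀ j, 0 ≤ am j)
    (hsymp : ∀ j k, aps j k = aps k j) (hsymm : ∀ j k, ams j k = ams k j)
    (hapo : ∀ j k, j ≠ k → apo j k ≤ 0) (hamo : ∀ j k, j ≠ k → amo j k ≤ 0) :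
    (∀ x : Fin n → ℝ, (∀ j, x j ∈ Set.Icc (-1:ℝ) 1) →
        ChB (muPlus ap aps apo) x = ChB (muMinus am ams amo) (-x)) ↔
    ((∀ j, ap j = am j) ∧
     (∀ j k, j ≠ k → aps j k = ams j k) ∧
     (∀ j k, j ≠ k → apo j k = amo k j)) := by
  constructor
  · intro h
    have key1 : ∀ j, ap j = am j := by
      intro j
      set x : Fin n → ℝ := fun i => if i = j then (1:ℝ) else 0 with hxdef
      have hvals : ∀ i, x i = -1 ∨ x i = 0 ∨ x i = 1 := by
        intro i; by_cases hi : i = j <;> simp [hxdef, hi]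
      have hvals' : ∀ i, (-x) i = -1 ∨ (-x) i = 0 ∨ (-x) i = 1 := by
        intro i; rcases hvals i with h' | h' | h' <;> simp [h']
      have hx := h x (by intro i; rcases hvals i with h' | h' | h' <;> rw [h'] <;> norm_num)
      have hP : Finset.univ.filter (fun i => x i = 1) = {j} := by
        ext i; simp only [hxdef, Finset.mem_filter, Finset.mem_univ, true_and,
          Finset.mem_singleton]
        split_ifs with h1 <;> simp [h1] <;> norm_num
      have hN : Finset.univ.filter (fun i => x i = -1) = (∅ : Finset (Fin n)) := by
        ext i; simp only [hxdef, Finset.mem_filter, Finset.mem_univ, true_and,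
          Finset.notMem_empty, iff_false]
        split_ifs <;> norm_num
      rw [ChB_eval _ x hvals {j} ∅ hP hN,
        ChB_eval _ (-x) hvals' ∅ {j} ((filter_negx_pos x).trans hN)
          ((filter_negx_neg x).trans hP)] at hx
      simpa [muPlus, muMinus, pairSum] using hx
    refine ⟨key1, ?_, ?_⟩
    · intro j k hjk
      set x : Fin n → ℝ := fun i => if i = j ∨ i = k then (1:ℝ) else 0 with hxdef
      have hvals : ∀ i, x i = -1 ∨ x i = 0 ∨ x i = 1 := by
        intro i; by_cases hi : i = j ∨ i = k <;> simp [hxdef, hi]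
      have hvals' : ∀ i, (-x) i = -1 ∨ (-x) i = 0 ∨ (-x) i = 1 := by
        intro i; rcases hvals i with h' | h' | h' <;> simp [h']
      have hx := h x (by intro i; rcases hvals i with h' | h' | h' <;> rw [h'] <;> norm_num)
      have hP : Finset.univ.filter (fun i => x i = 1) = {j, k} := by
        ext i; simp only [hxdef, Finset.mem_filter, Finset.mem_univ, true_and,
          Finset.mem_insert, Finset.mem_singleton]
        split_ifs with h1 <;> simp [h1] <;> norm_num
      have hN : Finset.univ.filter (fun i => x i = -1) = (∅ : Finset (Fin n)) := by
        ext i; simp only [hxdef, Finset.mem_filter, Finset.mem_univ, true_and,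
          Finset.notMem_empty, iff_false]
        split_ifs <;> norm_num
      rw [ChB_eval _ x hvals {j, k} ∅ hP hN,
        ChB_eval _ (-x) hvals' ∅ {j, k} ((filter_negx_pos x).trans hN)
          ((filter_negx_neg x).trans hP)] at hx
      simp only [muPlus, muMinus, pairSum_pair aps hjk, pairSum_pair ams hjk,
        Finset.sum_pair hjk, Finset.sum_empty] at hx
      have e1 := key1 j; have e2 := key1 k
      have s1 := hsymp j k; have s2 := hsymm j k
      linarith
    · intro j k hjk
      set x : Fin n → ℝ := fun i => if i = j then (1:ℝ) else if i = k then -1 else 0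
        with hxdef
      have hvals : ∀ i, x i = -1 ∨ x i = 0 ∨ x i = 1 := by
        intro i; simp only [hxdef]; split_ifs <;> norm_num
      have hvals' : ∀ i, (-x) i = -1 ∨ (-x) i = 0 ∨ (-x) i = 1 := by
        intro i; rcases hvals i with h' | h' | h' <;> simp [h']
      have hx := h x (by intro i; rcases hvals i with h' | h' | h' <;> rw [h'] <;> norm_num)
      have hP : Finset.univ.filter (fun i => x i = 1) = {j} := by
        ext i; simp only [hxdef, Finset.mem_filter, Finset.mem_univ, true_and,
          Finset.mem_singleton]
        split_ifs with h1 h2 <;> simp [h1] <;> norm_num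
      have hN : Finset.univ.filter (fun i => x i = -1) = {k} := by
        ext i; simp only [hxdef, Finset.mem_filter, Finset.mem_univ, true_and,
          Finset.mem_singleton]
        split_ifs with h1 h2
        · constructor
          · intro h'; norm_num at h'
          · intro h'; exact absurd (h1.symm.trans h') hjk
        · simp [h2]
        · norm_num [h2]
      rw [ChB_eval _ x hvals {j} {k} hP hN,
        ChB_eval _ (-x) hvals' {k} {j} ((filter_negx_pos x).trans hN)
          ((filter_negx_neg x).trans hP)] at hx
      simp only [muPlus, muMinus, pairSum, Finset.offDiag_singleton, Finset.sum_empty,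
        Finset.sum_singleton, zero_div, add_zero] at hx
      have e1 := key1 j
      linarith
  · rintro ⟨h1, h2, h3⟩ x hx
    unfold ChB
    apply intervalIntegral.integral_congr
    intro t ht
    rw [Set.uIcc_of_le zero_le_one] at ht
    exact integrand_eq ap am aps ams apo amo h1 h2 h3 x t ht.1
end

section
/- Let μ⁺ be given by a 2-additive decomposition. Then μ⁺(C,D) ≤ μ⁺(C∪{j},D) holds for all j ∈ J and all (C∪{j},D) ∈ P(J) with j ∉ C if and only if a_j⁺ + Σ_{k∈C} a_{jk}⁺ + Σ_{k∈D} a⁺_{j|k} ≥ 0 for all j ∈ J and all (C∪{j},D) ∈ P(J) with j ∉ C; indeed, μ⁺(C∪{j},D) − μ⁺(C,D) = a_j⁺ + Σ_{k∈C} a_{jk}⁺ + Σ_{k∈D} a⁺_{j|k} for every such j, C, D. -/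
lemma pairSum_insert {n : ℕ} (a : Fin n → Fin n → ℝ) (hsym : ∀ j k, a j k = a k j)
    {j : Fin n} {C : Finset (Fin n)} (hj : j ∉ C) :
    pairSum a (insert j C) = pairSum a C + ∑ k ∈ C, a j k := by
  unfold pairSum
  simp only [Finset.offDiag_insert hj]
  have h1 : Disjoint (C.offDiag ∪ {j} ×ˢ C) (C ×ˢ {j}) := by
    rw [Finset.disjoint_union_left]
    constructor
    · rw [Finset.disjoint_left]
      rintro ⟨x, y⟩ hx hy
      simp only [Finset.mem_product, Finset.mem_singleton] at hy
      exact hj (hy.2 ▸ (Finset.mem_offDiag.1 hx).2.1)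
    · rw [Finset.disjoint_left]
      rintro ⟨x, y⟩ hx hy
      simp only [Finset.mem_product, Finset.mem_singleton] at hx hy
      exact hj (hx.1 ▸ hy.1)
  have h2 : Disjoint C.offDiag ({j} ×ˢ C) := by
    rw [Finset.disjoint_left]
    rintro ⟨x, y⟩ hx hy
    simp only [Finset.mem_product, Finset.mem_singleton] at hy
    exact hj (hy.1 ▸ (Finset.mem_offDiag.1 hx).1)
  rw [Finset.sum_union h1, Finset.sum_union h2, Finset.sum_product, Finset.sum_product,
    Finset.sum_singleton]
  have : ∀ x ∈ C, ∑ y ∈ ({j} : Finset (Fin n)), a x y = a j x := by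
    intro x _; rw [Finset.sum_singleton, hsym]
  rw [Finset.sum_congr rfl this]
  ring

theorem stmt_13 {n : ℕ} (hn : 1 ≤ n)
    (ap : Fin n → ℝ) (aps apo : Fin n → Fin n → ℝ)
    (hap : ∀ j, 0 ≤ ap j)
    (hsym : ∀ j k, aps j k = aps k j)
    (hapo : ∀ j k, j ≠ k → apo j k ≤ 0) :
    ((∀ (j : Fin n) (C D : Finset (Fin n)), j ∉ C → Disjoint (insert j C) D →
        muPlus ap aps apo C D ≤ muPlus ap aps apo (insert j C) D) ↔
      (∀ (j : Fin n) (C D : Finset (Fin n)), j ∉ C → Disjoint (insert j C) D →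
        0 ≤ ap j + ∑ k ∈ C, aps j k + ∑ k ∈ D, apo j k)) ∧
    (∀ (j : Fin n) (C D : Finset (Fin n)), j ∉ C → Disjoint (insert j C) D →
        muPlus ap aps apo (insert j C) D - muPlus ap aps apo C D =
          ap j + ∑ k ∈ C, aps j k + ∑ k ∈ D, apo j k) := by
  have key : ∀ (j : Fin n) (C D : Finset (Fin n)), j ∉ C → Disjoint (insert j C) D →
      muPlus ap aps apo (insert j C) D - muPlus ap aps apo C D =
        ap j + ∑ k ∈ C, aps j k + ∑ k ∈ D, apo j k := by
    intro j C D hj _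
    unfold muPlus
    rw [Finset.sum_insert hj, Finset.sum_insert hj, pairSum_insert aps hsym hj]
    ring
  refine ⟨⟨fun h j C D hj hd => ?_, fun h j C D hj hd => ?_⟩, key⟩
  · have := h j C D hj hd
    have hk := key j C D hj hd
    linarith
  · have := h j C D hj hd
    have hk := key j C D hj hd
    linarith
end

section
/- Let μ⁺, μ⁻ be given by a 2-additive decomposition in which a_{jk}⁺ = a_{jk}⁻ = 0 for all unordered pairs {j,k}, a⁺_{j|k} = a⁻_{j|k} = 0 for all ordered pairs (j,k) with j ≠ k, and a_j⁺ = a_j⁻ = w_j ≥ 0 for all j ∈ J, and let μ̂(C,D) = μ⁺(C,D) − μ⁻(C,D). Then for every x ∈ [−1,1]^n, Ch^B(x,μ̂) = Σ_{j∈J} w_j·x_j, i.e. the bipolar Choquet integral reduces to the weighted sum of the classical PROMETHEE method. -/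
lemma indicator_eq (a c : ℝ) :
    (fun t => if t < a then c else 0) = Set.indicator (Set.Iio a) (fun _ => c) := by
  ext t
  simp [Set.indicator, Set.mem_Iio]

lemma intinteg (a c : ℝ) :
    IntervalIntegrable (fun t => if t < a then c else 0) MeasureTheory.volume 0 1 := by
  rw [intervalIntegrable_iff, indicator_eq]
  exact ((MeasureTheory.integrableOn_const_iff (C := c)).mpr
    (Or.inr (by simp [Set.uIoc_of_le (zero_le_one' ℝ)]))).indicator measurableSet_Iio

lemma integ_if (a c : ℝ) (ha : a ≤ 1) :
    ∫ t in (0:ℝ)..1, (if t < a then c else 0) = max a 0 * c := by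
  rw [intervalIntegral.integral_of_le zero_le_one, indicator_eq,
    MeasureTheory.setIntegral_indicator measurableSet_Iio]
  have hs : Set.Ioc (0:ℝ) 1 ∩ Set.Iio a = Set.Ioo 0 a := by
    ext t
    constructor
    · rintro ⟨⟨h1, _⟩, h3⟩; exact ⟨h1, h3⟩
    · rintro ⟨h1, h2⟩; exact ⟨⟨h1, le_trans (le_of_lt h2) ha⟩, h2⟩
  rw [hs, MeasureTheory.setIntegral_const, Real.volume_real_Ioo, smul_eq_mul]
  simp [ENNReal.toReal_ofReal']

theorem stmt_18 {n : ℕ} (hn : 1 ≤ n)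
    (w : Fin n → ℝ) (hw : ∀ j, 0 ≤ w j)
    (x : Fin n → ℝ) (hx : ∀ j, x j ∈ Set.Icc (-1:ℝ) 1) :
    ChB (fun C D => muPlus w (fun _ _ => 0) (fun _ _ => 0) C D
        - muMinus w (fun _ _ => 0) (fun _ _ => 0) C D) x =
      ∑ j, w j * x j := by
  unfold ChB muPlus muMinus pairSum
  have key : ∀ t : ℝ,
      ((∑ j ∈ Finset.univ.filter (fun j => t < x j), w j
        + (∑ p ∈ (Finset.univ.filter (fun j => t < x j)).offDiag, (0:ℝ)) / 2
        + ∑ j ∈ Finset.univ.filter (fun j => t < x j),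
            ∑ k ∈ Finset.univ.filter (fun j => x j < -t), (0:ℝ))
      - (∑ j ∈ Finset.univ.filter (fun j => x j < -t), w j
        + (∑ p ∈ (Finset.univ.filter (fun j => x j < -t)).offDiag, (0:ℝ)) / 2
        + ∑ j ∈ Finset.univ.filter (fun j => t < x j),
            ∑ k ∈ Finset.univ.filter (fun j => x j < -t), (0:ℝ)))
      = ∑ j : Fin n, ((if t < x j then w j else 0) - (if t < -(x j) then w j else 0)) := by
    intro t
    rw [Finset.sum_sub_distrib]
    simp [Finset.sum_filter]
    congr 1
    funext j
    congr 1
    simp only [eq_iff_iff]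
    constructor <;> intro h <;> linarith
  simp only [key]
  rw [intervalIntegral.integral_finset_sum
    (fun j _ => (intinteg (x j) (w j)).sub (intinteg (-(x j)) (w j)))]
  apply Finset.sum_congr rfl
  intro j _
  obtain ⟨h1, h2⟩ := hx j
  rw [intervalIntegral.integral_sub (intinteg _ _) (intinteg _ _),
    integ_if _ _ h2, integ_if _ _ (by linarith)]
  rcases le_or_gt (x j) 0 with h | h
  · rw [max_eq_right h, max_eq_left (by linarith)]; ring
  · rw [max_eq_left h.le, max_eq_right (by linarith)]; ring
end
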